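/- arXiv:1310.7137 — 7 statements merged into one kernel-verified Lean document; each statement's English description precedes it below -/
import Mathlib

section
/- Let (A, Σ, δ) be a finite automaton that admits no cycle with exit. Then for every choice of production functions ρ = (ρ_x : Σ → Σ)_{x∈A}, the semigroup generated by the enriched Mealy automaton (A, Σ, δ, ρ) is finite. -/
/-- Extended production function of a Mealy automaton: `mealyMap δ ρ x` is the
action of the state `x` on finite words over the alphabet. -/
def mealyMap {A S : Type*} (δ : S → A → A) (ρ : A → S → S) : A → List S → List S
  | _, [] => []
  | x, i :: s => ρ x i :: mealyMap δ ρ (δ i x) s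

/-- The semigroup generated by a Mealy automaton: the subsemigroup of maps
`Σ* → Σ*` (under composition) generated by the production functions. -/
def mealySemigroup {A S : Type*} (δ : S → A → A) (ρ : A → S → S) :
    Subsemigroup (Function.End (List S)) :=
  Subsemigroup.closure (Set.range fun x => (mealyMap δ ρ x : Function.End (List S)))

/-- The group generated by an invertible Mealy automaton: the subgroup of
permutations of `Σ*` generated by the production functions. -/
def mealyGroup {A S : Type*} (δ : S → A → A) (ρ : A → S → S) :
    Subgroup (Equiv.Perm (List S)) :=
  Subgroup.closure {f : Equiv.Perm (List S) | ∃ x : A, ⇑f = mealyMap δ ρ x}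

/-- A cycle in the automaton `(A, Σ, δ)`: pairwise distinct states
`states 0, …, states (n-1)` with transitions `states k —labels k→ states (k+1 mod n)`. -/
structure MealyCycle {A S : Type*} (δ : S → A → A) where
  n : ℕ
  npos : 0 < n
  states : Fin n → A
  labels : Fin n → S
  inj : Function.Injective states
  step : ∀ k : Fin n, δ (labels k) (states k) = states ⟨(k + 1) % n, Nat.mod_lt _ npos⟩

/-- The cycle has an external exit. -/
def HasExternalExit {A S : Type*} {δ : S → A → A} (C : MealyCycle δ) : Prop :=
  ∃ (k : Fin C.n) (i : S), δ i (C.states k) ∉ Set.range C.states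

/-- The cycle has an internal exit. -/
def HasInternalExit {A S : Type*} {δ : S → A → A} (C : MealyCycle δ) : Prop :=
  ∃ (k : Fin C.n) (i : S), δ i (C.states k) ∈ Set.range C.states ∧
    δ i (C.states k) ≠ δ (C.labels k) (C.states k)

/-- `v` is reachable from `u` in the automaton `(A, Σ, δ)`. -/
def Reachable {A S : Type*} (δ : S → A → A) (u v : A) : Prop :=
  ∃ s : List S, s.foldl (fun a i => δ i a) u = v

/-- Action of a word `s ∈ Σ*` on states of powers of the automaton (words over `A`),
via the production functions of the dual automaton: `dualAct δ ρ s = δ_s`. -/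
def dualAct {A S : Type*} (δ : S → A → A) (ρ : A → S → S) (s : List S) (u : List A) : List A :=
  s.foldl (fun w i => mealyMap ρ δ i w) u

/-- Two states of a power of a reversible Mealy automaton lie in the same
connected component iff some `δ_s` maps one to the other. -/
def sameComp {A S : Type*} (δ : S → A → A) (ρ : A → S → S) (u w : List A) : Prop :=
  ∃ s : List S, dualAct δ ρ s u = w

namespace ARAux

variable {A S : Type*}



/-- product (cascade) automaton transition -/
def dstep (δ : S → A → A) (ρ : A → S → S) : S → List A → List A
  | _, [] => []
  | i, x :: u => δ i x :: dstep δ ρ (ρ x i) u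

/-- product automaton production -/
def pstep (ρ : A → S → S) : List A → S → S :=
  fun u i => u.foldl (fun j x => ρ x j) i

def run (δ : S → A → A) (x : A) (s : List S) : A := s.foldl (fun a i => δ i a) x

section Explicit
variable (δ : S → A → A) (ρ : A → S → S)

lemma mealyMap_nil (x : A) : mealyMap δ ρ x [] = [] := rfl

lemma mealyMap_cons (x : A) (i : S) (s : List S) :
    mealyMap δ ρ x (i :: s) = ρ x i :: mealyMap δ ρ (δ i x) s := rfl

lemma mealyMap_length : ∀ (s : List S) (x : A), (mealyMap δ ρ x s).length = s.length
  | [], _ => rfl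
  | i :: s, x => by simp [mealyMap_cons, mealyMap_length s]

lemma run_nil (x : A) : run δ x [] = x := rfl

lemma run_cons (x : A) (i : S) (s : List S) : run δ x (i :: s) = run δ (δ i x) s := rfl

lemma run_append (x : A) (s t : List S) : run δ x (s ++ t) = run δ (run δ x s) t :=
  List.foldl_append ..

lemma mealyMap_append : ∀ (s t : List S) (x : A),
    mealyMap δ ρ x (s ++ t) = mealyMap δ ρ x s ++ mealyMap δ ρ (run δ x s) t
  | [], _, _ => rfl
  | i :: s, t, x => by simp [mealyMap_cons, mealyMap_append s t, run_cons]

lemma pstep_nil (i : S) : pstep ρ [] i = i := rfl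

lemma pstep_cons (x : A) (u : List A) (i : S) : pstep ρ (x :: u) i = pstep ρ u (ρ x i) := rfl

lemma pstep_append (u v : List A) (i : S) :
    pstep ρ (u ++ v) i = pstep ρ v (pstep ρ u i) := List.foldl_append ..

lemma dstep_append : ∀ (u v : List A) (i : S),
    dstep δ ρ i (u ++ v) = dstep δ ρ i u ++ dstep δ ρ (pstep ρ u i) v
  | [], _, _ => rfl
  | x :: u, v, i => by simp [dstep, dstep_append u v, pstep_cons]

lemma mealyMap_single : ∀ (s : List S) (x : A),
    mealyMap (dstep δ ρ) (pstep ρ) [x] s = mealyMap δ ρ x s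
  | [], _ => rfl
  | i :: s, x => by
      simp [mealyMap_cons, mealyMap_single s, pstep, dstep]

lemma mealyMap_comp : ∀ (s : List S) (u v : List A),
    mealyMap (dstep δ ρ) (pstep ρ) (u ++ v) s
      = mealyMap (dstep δ ρ) (pstep ρ) v (mealyMap (dstep δ ρ) (pstep ρ) u s)
  | [], _, _ => rfl
  | i :: s, u, v => by
      simp only [mealyMap_cons, pstep_append, dstep_append, mealyMap_comp s]


end Explicit


variable {A S : Type*}

def IsCyclic {A S : Type*} (δ : S → A → A) (x : A) : Prop :=
  ∃ C : MealyCycle δ, x ∈ Set.range C.states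

variable {δ : S → A → A}
variable (hyp : ∀ C : MealyCycle δ, ¬ (HasExternalExit C ∨ HasInternalExit C))
include hyp

/-- from a cyclic state, every transition goes to the cycle successor -/
lemma cycle_trans_eq (C : MealyCycle δ) (k : Fin C.n) (i : S) :
    δ i (C.states k) = δ (C.labels k) (C.states k) := by
  have hmem : δ i (C.states k) ∈ Set.range C.states := by
    by_contra hc
    exact hyp C (Or.inl ⟨k, i, hc⟩)
  by_cases heq : δ i (C.states k) = δ (C.labels k) (C.states k)
  · exact heq
  · exact absurd (Or.inr ⟨k, i, hmem, heq⟩) (hyp C)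

lemma cyclic_trans_eq {x : A} (hx : IsCyclic δ x) (i j : S) : δ i x = δ j x := by
  obtain ⟨C, k, rfl⟩ := hx
  rw [cycle_trans_eq hyp C k i, cycle_trans_eq hyp C k j]

lemma cyclic_trans {x : A} (hx : IsCyclic δ x) (i : S) : IsCyclic δ (δ i x) := by
  obtain ⟨C, k, rfl⟩ := hx
  rw [cycle_trans_eq hyp C k i, C.step k]
  exact ⟨C, ⟨_, rfl⟩⟩

lemma cyclic_run {x : A} (hx : IsCyclic δ x) : ∀ s : List S, IsCyclic δ (run δ x s) := by
  intro s
  induction s generalizing x with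
  | nil => exact hx
  | cons i s ih => exact ih (cyclic_trans hyp hx i)

omit hyp in
lemma run_take_succ (x : A) (s : List S) (m : ℕ) (hm : m < s.length) :
    δ (s.get ⟨m, hm⟩) (run δ x (s.take m)) = run δ x (s.take (m + 1)) := by
  have htake : s.take (m + 1) = s.take m ++ [s.get ⟨m, hm⟩] := by
    rw [List.take_succ, List.getElem?_eq_getElem hm]
    rfl
  rw [htake, run_append]
  rfl

lemma exists_cyclic_run [Fintype A] (x : A) (s : List S)
    (hs : Fintype.card A ≤ s.length) : IsCyclic δ (run δ x s) := by
  classical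
  set n := Fintype.card A with hn
  set P : ℕ → A := fun k => run δ x (s.take k) with hP
  have hrep : ∃ q, 0 < q ∧ ∃ c, c + q ≤ n ∧ P c = P (c + q) := by
    have hcard : Fintype.card A < Fintype.card (Fin (n + 1)) := by simp [hn]
    obtain ⟨a, b, hab, heq⟩ :=
      Fintype.exists_ne_map_eq_of_card_lt (fun k : Fin (n + 1) => P k) hcard
    rcases Nat.lt_or_ge a.val b.val with hlt | hge
    · exact ⟨b.val - a.val, by omega, a.val, by omega,
        by rw [show a.val + (b.val - a.val) = b.val by omega]; exact heq⟩
    · have hlt : b.val < a.val := by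
        rcases Nat.lt_or_ge b.val a.val with h' | h'
        · exact h'
        · exact absurd (Fin.ext (by omega)) hab
      exact ⟨a.val - b.val, by omega, b.val, by omega,
        by rw [show b.val + (a.val - b.val) = a.val by omega]; exact heq.symm⟩
  set q := Nat.find hrep with hq
  obtain ⟨hqpos, c, hcq, hPc⟩ := Nat.find_spec hrep
  have hkey : ∀ k1 k2 : ℕ, k1 < k2 → k2 < q → P (c + k1) ≠ P (c + k2) := by
    intro k1 k2 h12 h2q hPeq
    have : ¬ (0 < k2 - k1 ∧ ∃ c', c' + (k2 - k1) ≤ n ∧ P c' = P (c' + (k2 - k1))) :=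
      Nat.find_min hrep (by omega)
    exact this ⟨by omega, c + k1, by omega,
      by rw [show c + k1 + (k2 - k1) = c + k2 by omega]; exact hPeq⟩
  let C : MealyCycle δ :=
    { n := q
      npos := hqpos
      states := fun k => P (c + k.val)
      labels := fun k => s.get ⟨c + k.val, by omega⟩
      inj := by
        intro k1 k2 hk
        rcases Nat.lt_trichotomy k1.val k2.val with h | h | h
        · exact absurd hk (hkey k1.val k2.val h k2.isLt)
        · exact Fin.ext h
        · exact absurd hk.symm (hkey k2.val k1.val h k1.isLt)
      step := by
        intro k
        have hstep : δ (s.get ⟨c + k.val, by omega⟩) (P (c + k.val)) = P (c + k.val + 1) :=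
          run_take_succ x s (c + k.val) (by omega)
        by_cases hk : k.val + 1 < q
        · have hmod : (k.val + 1) % q = k.val + 1 := Nat.mod_eq_of_lt hk
          simp only [hmod]
          rw [show c + (k.val + 1) = c + k.val + 1 from by omega] at *
          exact hstep
        · have hk' : k.val + 1 = q := by omega
          have hmod : (k.val + 1) % q = 0 := by rw [hk']; exact Nat.mod_self q
          simp only [hmod]
          rw [hstep, show c + k.val + 1 = c + q from by omega, ← hPc, Nat.add_zero] }
  have hcyc : IsCyclic δ (P c) := ⟨C, ⟨⟨0, hqpos⟩, by simp [C]⟩⟩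
  have hsplit : run δ x s = run δ (P c) (s.drop c) := by
    conv_lhs => rw [← List.take_append_drop c s]
    exact List.foldl_append ..
  rw [hsplit]
  exact cyclic_run hyp hcyc _

omit hyp in
lemma iter_eventually_periodic [Fintype A] (f : A → A) (a : A) :
    f^[Fintype.card A + Nat.factorial (Fintype.card A)] a = f^[Fintype.card A] a := by
  classical
  set n := Fintype.card A with hn
  have hcard : Fintype.card A < Fintype.card (Fin (n + 1)) := by simp [hn]
  obtain ⟨k1, k2, hne, heq⟩ :=
    Fintype.exists_ne_map_eq_of_card_lt (fun k : Fin (n + 1) => f^[k.val] a) hcard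
  -- get c < d with f^[c] a = f^[d] a
  obtain ⟨c, q, hq, hcq, hper⟩ :
      ∃ c q, 0 < q ∧ c + q ≤ n ∧ f^[c + q] a = f^[c] a := by
    rcases Nat.lt_or_ge k1.val k2.val with hlt | hge
    · exact ⟨k1.val, k2.val - k1.val, by omega, by omega,
        by rw [show k1.val + (k2.val - k1.val) = k2.val by omega]; exact heq.symm⟩
    · have hlt : k2.val < k1.val := by
        rcases Nat.lt_or_ge k2.val k1.val with h' | h'
        · exact h'
        · exact absurd (Fin.ext (by omega)) hne
      exact ⟨k2.val, k1.val - k2.val, by omega, by omega,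
        by rw [show k2.val + (k1.val - k2.val) = k1.val by omega]; exact heq⟩
  have hstepq : ∀ m, c ≤ m → f^[m + q] a = f^[m] a := by
    intro m hm
    obtain ⟨e, rfl⟩ := Nat.exists_eq_add_of_le hm
    rw [show c + e + q = e + (c + q) by omega, Function.iterate_add_apply, hper,
      ← Function.iterate_add_apply, Nat.add_comm]
  have hj : ∀ j m, c ≤ m → f^[m + j * q] a = f^[m] a := by
    intro j
    induction j with
    | zero => simp
    | succ j ih =>
      intro m hm
      rw [show m + (j + 1) * q = (m + j * q) + q by ring, hstepq _ (by omega), ih m hm]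
  have hdvd : q ∣ Nat.factorial n := Nat.dvd_factorial hq (by omega)
  obtain ⟨j, hjq⟩ := hdvd
  rw [hjq, Nat.mul_comm, hj j n (by omega)]

variable (ρ : A → S → S)

def AllCyclic (δ : S → A → A) (u : List A) : Prop := ∀ x ∈ u, IsCyclic δ x

omit hyp in
lemma run_dstep_nil : ∀ s : List S, run (dstep δ ρ) [] s = []
  | [] => rfl
  | i :: s => run_dstep_nil s

omit hyp in
lemma run_dstep_cons : ∀ (s : List S) (x : A) (u : List A),
    run (dstep δ ρ) (x :: u) s = run δ x s :: run (dstep δ ρ) u (mealyMap δ ρ x s)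
  | [], _, _ => rfl
  | i :: s, x, u => by
      show run (dstep δ ρ) (δ i x :: dstep δ ρ (ρ x i) u) s = _
      rw [run_dstep_cons s]
      rfl

lemma allCyclic_run_long [Fintype A] :
    ∀ (u : List A) (s : List S), Fintype.card A ≤ s.length →
      AllCyclic δ (run (dstep δ ρ) u s) := by
  intro u
  induction u with
  | nil => intro s hs; rw [run_dstep_nil]; intro x hx; cases hx
  | cons x u ih =>
    intro s hs
    rw [run_dstep_cons]
    intro y hy
    rcases List.mem_cons.mp hy with rfl | hy
    · exact exists_cyclic_run hyp x s hs
    · exact ih (mealyMap δ ρ x s) (by rw [mealyMap_length]; exact hs) y hy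

lemma dstep_preserves {u : List A} (hu : AllCyclic δ u) (i : S) :
    AllCyclic δ (dstep δ ρ i u) := by
  induction u generalizing i with
  | nil => intro y hy; cases hy
  | cons x u ih =>
    intro y hy
    rcases List.mem_cons.mp hy with rfl | hy
    · exact cyclic_trans hyp (hu x (List.mem_cons_self ..)) i
    · exact ih (fun z hz => hu z (List.mem_cons_of_mem _ hz)) (ρ x i) y hy

lemma allCyclic_run {u : List A} (hu : AllCyclic δ u) (s : List S) :
    AllCyclic δ (run (dstep δ ρ) u s) := by
  induction s generalizing u with
  | nil => exact hu
  | cons i s ih => exact ih (dstep_preserves hyp ρ hu i)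

lemma dstep_allCyclic (i₀ : S) {u : List A} (hu : AllCyclic δ u) (i : S) :
    dstep δ ρ i u = u.map (δ i₀) := by
  induction u generalizing i with
  | nil => rfl
  | cons x u ih =>
    show δ i x :: dstep δ ρ (ρ x i) u = δ i₀ x :: u.map (δ i₀)
    rw [cyclic_trans_eq hyp (hu x (List.mem_cons_self ..)) i i₀,
      ih (fun z hz => hu z (List.mem_cons_of_mem _ hz)) (ρ x i)]

lemma run_allCyclic_iter (i₀ : S) {u : List A} (hu : AllCyclic δ u) (s : List S) :
    run (dstep δ ρ) u s = u.map ((δ i₀)^[s.length]) := by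
  induction s generalizing u with
  | nil => simp [run]
  | cons i s ih =>
    show run (dstep δ ρ) (dstep δ ρ i u) s = _
    rw [dstep_allCyclic hyp ρ i₀ hu i, ih (by
      intro y hy
      obtain ⟨x, hx, rfl⟩ := List.mem_map.mp hy
      exact cyclic_trans hyp (hu x hx) i₀), List.map_map]
    have hcomp : ((δ i₀)^[s.length] ∘ δ i₀) = (δ i₀)^[(i :: s).length] := by
      funext a
      simp [Function.iterate_succ_apply]
    rw [hcomp]

lemma master [Fintype A] (i₀ : S) (u : List A) (s t r : List S)
    (hs : s.length = 2 * Fintype.card A) (ht : t.length = Nat.factorial (Fintype.card A)) :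
    mealyMap (dstep δ ρ) (pstep ρ) u (s ++ (t ++ r))
      = mealyMap (dstep δ ρ) (pstep ρ) u (s ++ t)
        ++ (mealyMap (dstep δ ρ) (pstep ρ) u (s ++ r)).drop (2 * Fintype.card A) := by
  set n := Fintype.card A with hn
  set v := run (dstep δ ρ) u s with hv
  set u1 := run (dstep δ ρ) u (s.take n) with hu1
  have hA1 : AllCyclic δ u1 :=
    allCyclic_run_long hyp ρ u (s.take n) (by rw [List.length_take]; omega)
  have hvu1 : v = u1.map ((δ i₀)^[n]) := by
    rw [hv, ← List.take_append_drop n s, run_append, ← hu1,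
      run_allCyclic_iter hyp ρ i₀ hA1, List.length_drop, hs,
      show 2 * n - n = n from by omega]
  have hAv : AllCyclic δ v := by
    rw [hv, ← List.take_append_drop n s, run_append, ← hu1]
    exact allCyclic_run hyp ρ hA1 _
  have hvt : run (dstep δ ρ) v t = v := by
    rw [run_allCyclic_iter hyp ρ i₀ hAv t, ht, hvu1, List.map_map]
    congr 1
    funext a
    rw [Function.comp_apply, ← Function.iterate_add_apply, Nat.add_comm,
      iter_eventually_periodic]
  have hlen : (mealyMap (dstep δ ρ) (pstep ρ) u s).length = 2 * n := by
    rw [mealyMap_length, hs]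
  rw [mealyMap_append _ _ s (t ++ r), mealyMap_append _ _ t r,
    mealyMap_append _ _ s t, mealyMap_append _ _ s r, ← hv, hvt,
    ← hlen, List.drop_left, ← List.append_assoc]

lemma determined [Fintype A] (i₀ : S) (u v : List A)
    (hag : ∀ w : List S, w.length ≤ 2 * Fintype.card A + Nat.factorial (Fintype.card A) →
      mealyMap (dstep δ ρ) (pstep ρ) u w = mealyMap (dstep δ ρ) (pstep ρ) v w) :
    mealyMap (dstep δ ρ) (pstep ρ) u = mealyMap (dstep δ ρ) (pstep ρ) v := by
  set n := Fintype.card A with hn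
  have hfac : 0 < Nat.factorial n := Nat.factorial_pos n
  suffices hs : ∀ m (w : List S), w.length = m →
      mealyMap (dstep δ ρ) (pstep ρ) u w = mealyMap (dstep δ ρ) (pstep ρ) v w by
    funext w; exact hs w.length w rfl
  intro m
  induction m using Nat.strong_induction_on with
  | _ m ih =>
    intro w hw
    by_cases hwK : w.length ≤ 2 * n + Nat.factorial n
    · exact hag w hwK
    · push_neg at hwK
      set s := w.take (2 * n) with hsdef
      set tr := w.drop (2 * n) with htrdef
      set t := tr.take (Nat.factorial n) with htdef
      set r := tr.drop (Nat.factorial n) with hrdef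
      have hdecomp : w = s ++ (t ++ r) := by
        rw [htdef, hrdef, List.take_append_drop, hsdef, htrdef, List.take_append_drop]
      have hslen : s.length = 2 * n := by
        rw [hsdef, List.length_take]; omega
      have htrlen : tr.length = w.length - 2 * n := by
        rw [htrdef, List.length_drop]
      have htlen : t.length = Nat.factorial n := by
        rw [htdef, List.length_take]; omega
      have hrlen : r.length = w.length - 2 * n - Nat.factorial n := by
        rw [hrdef, List.length_drop, htrlen]
      rw [hdecomp, master hyp ρ i₀ u s t r hslen htlen, master hyp ρ i₀ v s t r hslen htlen,
        hag (s ++ t) (by rw [List.length_append, hslen, htlen]),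
        ih (s ++ r).length
          (by rw [List.length_append, hslen, hrlen]; omega) (s ++ r) rfl]

end ARAux

/-- Antonenko–Russyev: if a finite automaton admits no cycle with exit,
then whatever production functions it is enriched with, the generated semigroup is finite. -/
theorem no_cycle_with_exit_finite_semigroup
    {A S : Type*} [Fintype A] [Fintype S] [Nonempty A] [Nonempty S]
    (δ : S → A → A)
    (h : ∀ C : MealyCycle δ, ¬ (HasExternalExit C ∨ HasInternalExit C))
    (ρ : A → S → S) :
    Finite ↥(mealySemigroup δ ρ) := by
  classical
  obtain ⟨i₀⟩ := ‹Nonempty S›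
  set n := Fintype.card A with hn
  set K := 2 * n + Nat.factorial n with hK
  have hrep : ∀ f ∈ mealySemigroup δ ρ, ∃ u : List A,
      (f : List S → List S) = mealyMap (ARAux.dstep δ ρ) (ARAux.pstep ρ) u := by
    intro f hf
    induction hf using Subsemigroup.closure_induction with
    | mem g hg =>
      obtain ⟨x, rfl⟩ := hg
      exact ⟨[x], funext fun s => (ARAux.mealyMap_single δ ρ s x).symm⟩
    | mul f g hf hg ihf ihg =>
      obtain ⟨u, hu⟩ := ihf
      obtain ⟨v, hv⟩ := ihg
      refine ⟨v ++ u, funext fun s => ?_⟩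
      show f (g s) = _
      rw [hv, hu, ARAux.mealyMap_comp δ ρ s v u]
  have hT : Finite {w : List S // w.length ≤ K} := (List.finite_length_le S K).to_subtype
  set Φ : ↥(mealySemigroup δ ρ) →
      ({w : List S // w.length ≤ K} → {w : List S // w.length ≤ K}) :=
    fun f w => ⟨(f.1 w.1).take K, le_trans (List.length_take_le ..) le_rfl⟩ with hΦ
  have hinj : Function.Injective Φ := by
    intro f g hfg
    obtain ⟨u, hu⟩ := hrep f.1 f.2
    obtain ⟨v, hv⟩ := hrep g.1 g.2
    apply Subtype.ext
    show (f.1 : List S → List S) = g.1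
    rw [hu, hv]
    apply ARAux.determined h ρ i₀
    intro w hw
    have := congrFun hfg ⟨w, hw⟩
    simp only [hΦ, Subtype.mk.injEq] at this
    have hlen1 : ((f.1 : List S → List S) w).length ≤ K := by
      rw [hu, ARAux.mealyMap_length]; exact hw
    have hlen2 : ((g.1 : List S → List S) w).length ≤ K := by
      rw [hv, ARAux.mealyMap_length]; exact hw
    rw [List.take_of_length_le hlen1, List.take_of_length_le hlen2] at this
    rw [← hu, ← hv]
    exact this
  exact Finite.of_injective Φ hinj
end

section
/- (River of no return Lemma) Let (A, Σ, δ) be a finite automaton with alphabet of at least two elements, and let C be a cycle in it. If C admits an external exit to some state y (i.e., some transition x —i→ y with x on C and y not on C) such that no state of C is reachable from y, then there exists a family ρ = (ρ_x)_{x∈A} of permutations of Σ such that the group generated by the invertible Mealy automaton (A, Σ, δ, ρ) is infinite. -/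
namespace RiverAux

variable {A S : Type*}

def invMap (δ : S → A → A) (ρ : A → Equiv.Perm S) : A → List S → List S
  | _, [] => []
  | x, j :: s => (ρ x)⁻¹ j :: invMap δ ρ (δ ((ρ x)⁻¹ j) x) s

lemma invMap_mealyMap (δ : S → A → A) (ρ : A → Equiv.Perm S) (s : List S) :
    ∀ x : A, invMap δ ρ x (mealyMap δ (fun a => ⇑(ρ a)) x s) = s := by
  induction s with
  | nil => intro x; rfl
  | cons j s ih =>
    intro x
    simp [mealyMap, invMap, ih]

lemma mealyMap_invMap (δ : S → A → A) (ρ : A → Equiv.Perm S) (s : List S) :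
    ∀ x : A, mealyMap δ (fun a => ⇑(ρ a)) x (invMap δ ρ x s) = s := by
  induction s with
  | nil => intro x; rfl
  | cons j s ih =>
    intro x
    simp [mealyMap, invMap, ih]

def mealyPerm (δ : S → A → A) (ρ : A → Equiv.Perm S) (x : A) : Equiv.Perm (List S) where
  toFun := mealyMap δ (fun a => ⇑(ρ a)) x
  invFun := invMap δ ρ x
  left_inv s := invMap_mealyMap δ ρ s x
  right_inv s := mealyMap_invMap δ ρ s x

lemma mealyMap_id (δ : S → A → A) (ρ : A → Equiv.Perm S) (w : List S) :
    ∀ u : A, (∀ v, Reachable δ u v → ρ v = 1) → mealyMap δ (fun a => ⇑(ρ a)) u w = w := by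
  induction w with
  | nil => intro u _; rfl
  | cons j s ih =>
    intro u h
    have h1 : ρ u = 1 := h u ⟨[], rfl⟩
    have h2 : ∀ v, Reachable δ (δ j u) v → ρ v = 1 := by
      rintro v ⟨t, ht⟩
      exact h v ⟨j :: t, ht⟩
    simp [mealyMap, h1, ih _ h2]

/-- segment of labels: `[lb t, lb (t+1), …, lb (t+c-1)]`. -/
def seg (lb : ℕ → S) : ℕ → ℕ → List S
  | _, 0 => []
  | t, c + 1 => lb t :: seg lb (t + 1) c

lemma pass (δ : S → A → A) (ρ : A → Equiv.Perm S) (st : ℕ → A) (lb : ℕ → S) (n : ℕ)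
    (hstep : ∀ t, δ (lb t) (st t) = st (t + 1))
    (hρ : ∀ t, 1 ≤ t → t < n → ρ (st t) = 1) :
    ∀ (c t : ℕ) (w : List S), 1 ≤ t → t + c ≤ n →
      mealyMap δ (fun a => ⇑(ρ a)) (st t) (seg lb t c ++ w) =
        seg lb t c ++ mealyMap δ (fun a => ⇑(ρ a)) (st (t + c)) w := by
  intro c
  induction c with
  | zero => intro t w _ _; simp [seg]
  | succ c ih =>
    intro t w ht htc
    have h1 : ρ (st t) = 1 := hρ t ht (by omega)
    have ih' := ih (t + 1) w (by omega) (by omega)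
    rw [show t + 1 + c = t + (c + 1) from by omega] at ih'
    simp only [seg, List.cons_append, mealyMap, h1, Equiv.Perm.coe_one, id_eq, hstep t,
      List.append_eq, ih']

/-- encode a boolean sequence as a word, `true ↦ L`, `false ↦ B`. -/
def enc (L B : List S) : List Bool → List S
  | [] => []
  | b :: t => (if b then L else B) ++ enc L B t

/-- binary increment (least significant digit first, `true` = 1). -/
def incr : List Bool → List Bool
  | [] => []
  | true :: t => false :: incr t
  | false :: t => true :: t

def val : List Bool → ℕ
  | [] => 0
  | b :: t => (if b then 1 else 0) + 2 * val t

lemma length_incr : ∀ bs : List Bool, (incr bs).length = bs.length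
  | [] => rfl
  | true :: t => by simp [incr, length_incr t]
  | false :: t => by simp [incr]

lemma val_incr : ∀ bs : List Bool, val bs + 1 < 2 ^ bs.length → val (incr bs) = val bs + 1
  | [] => by intro h; simp at h
  | true :: t => by
    intro h
    have hlt : val t + 1 < 2 ^ t.length := by
      simp only [val, List.length_cons, pow_succ, if_true] at h
      omega
    simp only [incr, val, val_incr t hlt]
    simp only [Bool.false_eq_true, if_false, if_true]
    omega
  | false :: t => by
    intro h
    simp only [incr, val]
    simp only [Bool.false_eq_true, if_false, if_true]
    omega

lemma val_replicate_false (m : ℕ) : val (List.replicate m false) = 0 := by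
  induction m with
  | zero => rfl
  | succ m ih => simp [List.replicate, val, ih]

lemma enc_step (f : List S → List S) (L B : List S)
    (hL : ∀ w, f (L ++ w) = B ++ f w) (hB : ∀ w, f (B ++ w) = L ++ w) (hnil : f [] = []) :
    ∀ bs, f (enc L B bs) = enc L B (incr bs) := by
  intro bs
  induction bs with
  | nil => simpa [enc, incr] using hnil
  | cons b t ih =>
    cases b with
    | true => simp [enc, incr, hL, ih]
    | false => simp [enc, incr, hB]

lemma enc_inj (a b : S) (hab : a ≠ b) (T : List S) :
    ∀ bs₁ bs₂ : List Bool, bs₁.length = bs₂.length →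
      enc (a :: T) (b :: T) bs₁ = enc (a :: T) (b :: T) bs₂ → bs₁ = bs₂ := by
  intro bs₁
  induction bs₁ with
  | nil =>
    intro bs₂ hlen _
    exact (List.length_eq_zero_iff.mp hlen.symm).symm
  | cons c t ih =>
    intro bs₂ hlen heq
    cases bs₂ with
    | nil => simp at hlen
    | cons c₂ t₂ =>
      cases c <;> cases c₂ <;>
          simp only [enc, if_true, if_false, Bool.false_eq_true, ite_true, ite_false,
            List.cons_append] at heq
      · injection heq with _ h2
        rw [ih t₂ (by simpa using hlen) (List.append_cancel_left h2)]
      · injection heq with h1 _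
        exact absurd h1.symm hab
      · injection heq with h1 _
        exact absurd h1 hab
      · injection heq with _ h2
        rw [ih t₂ (by simpa using hlen) (List.append_cancel_left h2)]

lemma iterate_incr (m : ℕ) :
    ∀ j, j < 2 ^ m → (incr^[j] (List.replicate m false)).length = m ∧
      val (incr^[j] (List.replicate m false)) = j := by
  intro j
  induction j with
  | zero => intro _; simp [val_replicate_false]
  | succ j ih =>
    intro hj
    obtain ⟨hl, hv⟩ := ih (by omega)
    rw [Function.iterate_succ_apply']
    refine ⟨by rw [length_incr, hl], ?_⟩
    rw [val_incr _ (by rw [hl, hv]; exact hj), hv]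

end RiverAux

/-- River of no return Lemma: if a cycle `C` of a finite automaton has an
external exit `x —i→ y` (with `x` on `C` and `y` not on `C`) such that no state of `C`
is reachable from `y`, then the automaton can be enriched with invertible production
functions so that the generated group is infinite. -/
theorem river_of_no_return
    {A S : Type*} [Fintype A] [Fintype S]
    (hS : 1 < Fintype.card S) (δ : S → A → A)
    (C : MealyCycle δ) (k : Fin C.n) (i : S) (y : A)
    (hy : δ i (C.states k) = y) (hyC : y ∉ Set.range C.states)
    (hnr : ∀ m : Fin C.n, ¬ Reachable δ y (C.states m)) :
    ∃ ρ : A → Equiv.Perm S, Infinite ↥(mealyGroup δ (fun a => ⇑(ρ a))) := by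
  classical
  obtain ⟨m, hm⟩ : ∃ m, C.n = m + 1 := ⟨C.n - 1, by have := C.npos; omega⟩
  set l : S := C.labels k with hldef
  have hil : i ≠ l := by
    intro h
    apply hyC
    rw [← hy, h, hldef, C.step k]
    exact ⟨_, rfl⟩
  refine ⟨fun a => if a = C.states k then Equiv.swap i l else 1, ?_⟩
  set ρ : A → Equiv.Perm S := fun a => if a = C.states k then Equiv.swap i l else 1 with hρdef
  set ρ' : A → S → S := fun a => ⇑(ρ a) with hρ'def
  -- the states and labels around the cycle, starting from position k
  set st : ℕ → A := fun t => C.states ⟨(↑k + t) % C.n, Nat.mod_lt _ C.npos⟩ with hstdef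
  set lb : ℕ → S := fun t => C.labels ⟨(↑k + t) % C.n, Nat.mod_lt _ C.npos⟩ with hlbdef
  have hkn : (↑k : ℕ) < C.n := k.isLt
  have hst0 : st 0 = C.states k := by
    simp only [hstdef]
    congr 1
    exact Fin.ext (by simp [Nat.mod_eq_of_lt hkn])
  have hlb0 : lb 0 = l := by
    simp only [hlbdef, hldef]
    congr 1
    exact Fin.ext (by simp [Nat.mod_eq_of_lt hkn])
  have hstep : ∀ t, δ (lb t) (st t) = st (t + 1) := by
    intro t
    have h := C.step ⟨(↑k + t) % C.n, Nat.mod_lt _ C.npos⟩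
    simp only [hstdef, hlbdef]
    rw [h]
    congr 1
    exact Fin.ext (by simp [Nat.mod_add_mod, Nat.add_assoc])
  have hstn : st C.n = C.states k := by
    simp only [hstdef]
    congr 1
    exact Fin.ext (by simp [Nat.add_mod_right, Nat.mod_eq_of_lt hkn])
  have hstne : ∀ t, 1 ≤ t → t < C.n → st t ≠ C.states k := by
    intro t h1 h2 hcon
    have heq : (⟨(↑k + t) % C.n, Nat.mod_lt _ C.npos⟩ : Fin C.n) = k := C.inj hcon
    have heq2 : (↑k + t) % C.n = (↑k + 0) % C.n := by
      simpa [Nat.mod_eq_of_lt hkn] using congrArg Fin.val heq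
    have ht0 : t % C.n = 0 % C.n := Nat.ModEq.add_left_cancel' ↑k heq2
    rw [Nat.mod_eq_of_lt h2, Nat.zero_mod] at ht0
    omega
  have hρ1 : ∀ t, 1 ≤ t → t < C.n → ρ (st t) = 1 := fun t h1 h2 => if_neg (hstne t h1 h2)
  have hρk : ρ (C.states k) = Equiv.swap i l := if_pos rfl
  set F : Equiv.Perm (List S) := RiverAux.mealyPerm δ ρ (C.states k) with hFdef
  have hFcoe : ⇑F = mealyMap δ ρ' (C.states k) := rfl
  set T : List S := RiverAux.seg lb 1 m with hTdef
  set L : List S := l :: T with hLdef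
  set Bw : List S := i :: T with hBdef
  have hst1m : st (1 + m) = C.states k := by rw [show 1 + m = C.n from by omega, hstn]
  have hpass : ∀ w, mealyMap δ ρ' (st 1) (T ++ w) = T ++ mealyMap δ ρ' (st (1 + m)) w :=
    fun w => RiverAux.pass δ ρ st lb C.n hstep hρ1 m 1 w le_rfl (by omega)
  -- action on an L-block
  have hfL : ∀ w, ⇑F (L ++ w) = Bw ++ ⇑F w := by
    intro w
    rw [hFcoe]
    show mealyMap δ ρ' (C.states k) (l :: (T ++ w)) = Bw ++ mealyMap δ ρ' (C.states k) w
    have hδl : δ l (C.states k) = st 1 := by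
      have h := hstep 0
      rwa [hlb0, hst0] at h
    simp only [mealyMap]
    rw [hδl, hpass w, hst1m]
    simp only [hρ'def, hρk, Equiv.swap_apply_right]
    rw [hBdef, List.cons_append]
  -- action on a B-block: exit to y, then identity forever
  have hid : ∀ w', mealyMap δ ρ' y w' = w' := by
    intro w'
    refine RiverAux.mealyMap_id δ ρ w' y ?_
    intro v hv
    refine if_neg ?_
    intro hvk
    exact hnr k (hvk ▸ hv)
  have hfB : ∀ w, ⇑F (Bw ++ w) = L ++ w := by
    intro w
    rw [hFcoe]
    show mealyMap δ ρ' (C.states k) (i :: (T ++ w)) = L ++ w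
    simp only [mealyMap]
    rw [hy, hid (T ++ w)]
    simp only [hρ'def, hρk, Equiv.swap_apply_left]
    rw [hLdef, List.cons_append]
  have hfnil : ⇑F [] = [] := rfl
  have henc := RiverAux.enc_step (⇑F) L Bw hfL hfB hfnil
  -- powers of F act as iterated binary increment
  have hpow : ∀ (d : ℕ) (bs : List Bool),
      (F ^ d) (RiverAux.enc L Bw bs) = RiverAux.enc L Bw (RiverAux.incr^[d] bs) := by
    intro d
    induction d with
    | zero => intro bs; simp
    | succ d ih =>
      intro bs
      rw [pow_succ, Equiv.Perm.mul_apply, henc bs, ih (RiverAux.incr bs),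
        Function.iterate_succ_apply]
  -- F has infinite order
  have hFne : ∀ e, 0 < e → F ^ e ≠ 1 := by
    intro e he hcon
    have h1 := hpow e (List.replicate e false)
    rw [hcon, Equiv.Perm.one_apply] at h1
    have he2 : e < 2 ^ e := Nat.lt_two_pow_self (n := e)
    obtain ⟨hlen, hval⟩ := RiverAux.iterate_incr e e he2
    have heq : List.replicate e false = RiverAux.incr^[e] (List.replicate e false) :=
      RiverAux.enc_inj l i (Ne.symm hil) T _ _ (by simp [hlen]) h1
    rw [← heq, RiverAux.val_replicate_false] at hval
    omega
  have hmem : F ∈ mealyGroup δ ρ' := Subgroup.subset_closure ⟨C.states k, hFcoe⟩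
  refine Infinite.of_injective
    (fun d : ℕ => (⟨F ^ d, pow_mem hmem d⟩ : ↥(mealyGroup δ ρ'))) ?_
  intro d₁ d₂ hd
  have hFd : F ^ d₁ = F ^ d₂ := Subtype.ext_iff.mp hd
  by_contra hne
  rcases Nat.lt_or_ge d₁ d₂ with h | h
  · have h3 : F ^ (d₂ - d₁) * F ^ d₁ = F ^ d₁ := by
      rw [← pow_add, Nat.sub_add_cancel (le_of_lt h), hFd]
    exact hFne (d₂ - d₁) (by omega) (mul_right_cancel (h3.trans (one_mul _).symm))
  · have h2 : d₂ < d₁ := by omega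
    have h3 : F ^ (d₁ - d₂) * F ^ d₂ = F ^ d₂ := by
      rw [← pow_add, Nat.sub_add_cancel (le_of_lt h2), ← hFd]
    exact hFne (d₁ - d₂) (by omega) (mul_right_cancel (h3.trans (one_mul _).symm))
end

section
/- Let (A, Σ, δ) be a reversible finite automaton with alphabet of at least two elements that contains a cycle with exit. Then there exists a family ρ = (ρ_x)_{x∈A} of permutations of Σ such that the group generated by the invertible Mealy automaton (A, Σ, δ, ρ) is infinite. -/
namespace MealyAux


variable {A S : Type*}

/-- State reached after reading a word. -/
def runA (δ : S → A → A) (x : A) (s : List S) : A := s.foldl (fun a i => δ i a) x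

theorem runA_nil (δ : S → A → A) (x : A) : runA δ x [] = x := rfl

theorem runA_cons (δ : S → A → A) (x : A) (i : S) (s : List S) :
    runA δ x (i :: s) = runA δ (δ i x) s := rfl

theorem mealyMap_nil (δ : S → A → A) (ρ : A → S → S) (x : A) :
    mealyMap δ ρ x [] = [] := rfl

theorem mealyMap_cons (δ : S → A → A) (ρ : A → S → S) (x : A) (i : S) (s : List S) :
    mealyMap δ ρ x (i :: s) = ρ x i :: mealyMap δ ρ (δ i x) s := rfl

theorem mealyMap_length (δ : S → A → A) (ρ : A → S → S) (x : A) (s : List S) :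
    (mealyMap δ ρ x s).length = s.length := by
  induction s generalizing x with
  | nil => rfl
  | cons i t ih => simp [mealyMap_cons, ih]

theorem mealyMap_append (δ : S → A → A) (ρ : A → S → S) (x : A) (s t : List S) :
    mealyMap δ ρ x (s ++ t) = mealyMap δ ρ x s ++ mealyMap δ ρ (runA δ x s) t := by
  induction s generalizing x with
  | nil => rfl
  | cons i s' ih => simp [mealyMap_cons, ih, runA_cons]

section perm

variable (δ : S → A → A) (ρ : A → Equiv.Perm S)

/-- The inverse production function. -/
def mInv : A → List S → List S :=
  mealyMap (fun i x => δ ((ρ x).symm i) x) (fun x => ⇑(ρ x).symm)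

theorem mInv_left (x : A) (s : List S) :
    mInv δ ρ x (mealyMap δ (fun a => ⇑(ρ a)) x s) = s := by
  induction s generalizing x with
  | nil => rfl
  | cons i t ih =>
    rw [mealyMap_cons, mInv, mealyMap_cons, ← mInv]
    simp [ih]

theorem mInv_right (x : A) (s : List S) :
    mealyMap δ (fun a => ⇑(ρ a)) x (mInv δ ρ x s) = s := by
  induction s generalizing x with
  | nil => rfl
  | cons j t ih =>
    rw [mInv, mealyMap_cons, ← mInv, mealyMap_cons]
    simp [ih]

/-- The production function of a state as a permutation of words. -/
def gPerm (x : A) : Equiv.Perm (List S) :=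
  ⟨mealyMap δ (fun a => ⇑(ρ a)) x, mInv δ ρ x, mInv_left δ ρ x, mInv_right δ ρ x⟩

theorem gPerm_coe (x : A) : ⇑(gPerm δ ρ x) = mealyMap δ (fun a => ⇑(ρ a)) x := rfl

theorem gPerm_mem (x : A) : gPerm δ ρ x ∈ mealyGroup δ (fun a => ⇑(ρ a)) :=
  Subgroup.subset_closure ⟨x, rfl⟩

end perm


/-- Words all whose letters lie in `{c₀, c₁}`. -/
def Bin (c₀ c₁ : S) (l : List S) : Prop := ∀ u ∈ l, u = c₀ ∨ u = c₁

/-- The key stability properties of elements of a Mealy group. -/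
structure GoodFun (c₀ c₁ : S) (f : List S → List S) : Prop where
  len : ∀ s, (f s).length = s.length
  pre : ∀ s t, f s <+: f (s ++ t)
  bin : ∀ s, Bin c₀ c₁ s → Bin c₀ c₁ (f s)

theorem goodFun_mealyMap (δ : S → A → A) (ρ : A → S → S) (c₀ c₁ : S)
    (hρ : ∀ x i, (i = c₀ ∨ i = c₁) → (ρ x i = c₀ ∨ ρ x i = c₁)) (x : A) :
    GoodFun c₀ c₁ (mealyMap δ ρ x) := by
  refine ⟨mealyMap_length δ ρ x, fun s t => ⟨_, (mealyMap_append δ ρ x s t).symm⟩, ?_⟩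
  intro s
  induction s generalizing x with
  | nil => intro _ u hu; exact absurd hu List.not_mem_nil
  | cons i t ih =>
    intro hb u hu
    rw [mealyMap_cons] at hu
    rcases List.mem_cons.mp hu with rfl | hu
    · exact hρ x i (hb i List.mem_cons_self)
    · exact ih (δ i x) (fun v hv => hb v (List.mem_cons_of_mem _ hv)) u hu

theorem goodFun_group [Finite S] (δ : S → A → A) (ρ : A → S → S) (c₀ c₁ : S)
    (hρ : ∀ x i, (i = c₀ ∨ i = c₁) → (ρ x i = c₀ ∨ ρ x i = c₁)) :
    ∀ f ∈ mealyGroup δ ρ, GoodFun c₀ c₁ ⇑f := by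
  intro f hf
  induction hf using Subgroup.closure_induction with
  | mem g hg => obtain ⟨x, hx⟩ := hg; rw [hx]; exact goodFun_mealyMap δ ρ c₀ c₁ hρ x
  | one => exact ⟨fun s => rfl, fun s t => ⟨t, rfl⟩, fun s hs => hs⟩
  | mul g h _ _ hg hh =>
    refine ⟨fun s => ?_, fun s t => ?_, fun s hs => ?_⟩
    · rw [Equiv.Perm.mul_apply, hg.len, hh.len]
    · rw [Equiv.Perm.mul_apply, Equiv.Perm.mul_apply]
      obtain ⟨t', ht'⟩ := hh.pre s t
      rw [← ht']
      exact hg.pre _ _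
    · rw [Equiv.Perm.mul_apply]; exact hg.bin _ (hh.bin _ hs)
  | inv g _ hg =>
    have hlen : ∀ s : List S, (⇑g⁻¹ s).length = s.length := by
      intro s
      conv_rhs => rw [← (Equiv.Perm.eq_inv_iff_eq.mp rfl : g (g⁻¹ s) = s)]
      rw [hg.len]
    refine ⟨hlen, fun s t => ?_, fun s hs => ?_⟩
    · -- prefix preservation for the inverse
      have hu : ⇑g (⇑g⁻¹ (s ++ t)) = s ++ t := Equiv.Perm.eq_inv_iff_eq.mp rfl
      set u := ⇑g⁻¹ (s ++ t) with hudef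
      have hul : u.length = s.length + t.length := by
        rw [hudef, hlen, List.length_append]
      have h1 : ⇑g (u.take s.length) <+: s ++ t := by
        have h2 := hg.pre (u.take s.length) (u.drop s.length)
        rw [List.take_append_drop, hu] at h2
        exact h2
      have h3 : (⇑g (u.take s.length)).length = s.length := by
        rw [hg.len, List.length_take, hul]
        omega
      have h4 : ⇑g (u.take s.length) = s := by
        have := List.prefix_iff_eq_take.mp h1
        rw [h3] at this
        rw [this, List.take_left]
      have h5 : u.take s.length = ⇑g⁻¹ s := by
        apply g.injective
        rw [(Equiv.Perm.eq_inv_iff_eq.mp rfl : g (g⁻¹ s) = s)]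
        exact h4
      rw [← h5, hudef]
      exact List.take_prefix _ _
    · -- binary preservation for the inverse
      classical
      set n := s.length with hn
      set B : Set (List S) := {l | Bin c₀ c₁ l ∧ l.length = n} with hB
      have hBfin : B.Finite := (List.finite_length_eq S n).subset (fun l hl => hl.2)
      have hmaps : Set.MapsTo ⇑g B B := fun l hl => ⟨hg.bin l hl.1, (hg.len l).trans hl.2⟩
      have hinj : Set.InjOn ⇑g B := g.injective.injOn
      have hbij := (hBfin.injOn_iff_bijOn_of_mapsTo hmaps).mp hinj
      have hsB : s ∈ B := ⟨hs, rfl⟩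
      obtain ⟨l, hlB, hfl⟩ := hbij.surjOn hsB
      have : ⇑g⁻¹ s = l := by rw [← hfl, (Equiv.Perm.inv_eq_iff_eq.mpr rfl : g⁻¹ (g l) = l)]
      rw [this]
      exact hlB.1

theorem goodFun_extend {c₀ c₁ : S} {f : List S → List S} (hf : GoodFun c₀ c₁ f)
    (s : List S) (c : S) : ∃ c', f (s ++ [c]) = f s ++ [c'] := by
  obtain ⟨t', ht'⟩ := hf.pre s [c]
  have h1 : t'.length = 1 := by
    have := hf.len (s ++ [c])
    rw [← ht', List.length_append, List.length_append, hf.len] at this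
    simpa using this
  obtain ⟨c', rfl⟩ := List.length_eq_one_iff.mp h1
  exact ⟨c', ht'.symm⟩


section construction

variable (δ : S → A → A) (y : A) (c₀ c₁ : S)

/-- Encoding booleans as the two chosen letters. -/
def encB (t : Bool) : S := cond t c₁ c₀

/-- Encoding boolean words as binary words over the alphabet. -/
def encL (v : List Bool) : List S := v.map (encB c₀ c₁)

theorem encL_nil : encL c₀ c₁ [] = [] := rfl

theorem encL_cons (t : Bool) (v : List Bool) :
    encL c₀ c₁ (t :: v) = encB c₀ c₁ t :: encL c₀ c₁ v := rfl

theorem encL_append (v w : List Bool) :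
    encL c₀ c₁ (v ++ w) = encL c₀ c₁ v ++ encL c₀ c₁ w := List.map_append

theorem encL_length (v : List Bool) : (encL c₀ c₁ v).length = v.length :=
  List.length_map _

theorem encB_or (t : Bool) : encB c₀ c₁ t = c₀ ∨ encB c₀ c₁ t = c₁ := by
  cases t
  · exact Or.inl rfl
  · exact Or.inr rfl

theorem encL_bin (v : List Bool) : Bin c₀ c₁ (encL c₀ c₁ v) := by
  intro u hu
  obtain ⟨t, _, rfl⟩ := List.mem_map.mp hu
  exact encB_or c₀ c₁ t

theorem encB_injective (hc : c₀ ≠ c₁) : Function.Injective (encB c₀ c₁) := by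
  intro a b hab
  cases a <;> cases b
  · rfl
  · exact absurd hab hc
  · exact absurd hab.symm hc
  · rfl

theorem encL_injective (hc : c₀ ≠ c₁) : Function.Injective (encL c₀ c₁) :=
  List.map_injective_iff.mpr (encB_injective c₀ c₁ hc)

/-- The chosen production functions: swap the two letters at `y`, identity elsewhere. -/
noncomputable def rhoSwap : A → Equiv.Perm S := fun x =>
  letI := Classical.decEq S
  letI := Classical.dec (x = y)
  if x = y then Equiv.swap c₀ c₁ else 1

theorem rhoSwap_apply_ne {x : A} (hx : x ≠ y) (i : S) :
    rhoSwap y c₀ c₁ x i = i := by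
  simp [rhoSwap, if_neg hx]

theorem rhoSwap_left : rhoSwap y c₀ c₁ y c₀ = c₁ := by
  simp [rhoSwap]

theorem rhoSwap_right : rhoSwap y c₀ c₁ y c₁ = c₀ := by
  simp [rhoSwap]

theorem rhoSwap_bin (x : A) (i : S) (hi : i = c₀ ∨ i = c₁) :
    (fun a => ⇑(rhoSwap y c₀ c₁ a)) x i = c₀ ∨ (fun a => ⇑(rhoSwap y c₀ c₁ a)) x i = c₁ := by
  show rhoSwap y c₀ c₁ x i = c₀ ∨ rhoSwap y c₀ c₁ x i = c₁
  by_cases hx : x = y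
  · rcases hi with h | h
    · right; rw [hx, h]; exact rhoSwap_left _ _ _
    · left; rw [hx, h]; exact rhoSwap_right _ _ _
  · rw [rhoSwap_apply_ne y c₀ c₁ hx]; exact hi

/-- If the path never meets `y` strictly before the end, the word is unchanged. -/
theorem mealyMap_avoid : ∀ (s : List S) (x : A),
    (∀ k < s.length, runA δ x (s.take k) ≠ y) →
    mealyMap δ (fun a => ⇑(rhoSwap y c₀ c₁ a)) x s = s := by
  intro s
  induction s with
  | nil => intro x _; rfl
  | cons i t ih =>
    intro x h
    have hx : x ≠ y := by
      have := h 0 (Nat.succ_pos _)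
      simpa [runA_nil] using this
    rw [mealyMap_cons, rhoSwap_apply_ne y c₀ c₁ hx]
    congr 1
    apply ih
    intro k hk
    have := h (k + 1) (Nat.succ_lt_succ hk)
    simpa [runA_cons] using this

theorem mealyMap_last (x : A) (s : List S) (c : S)
    (havoid : ∀ k < s.length, runA δ x (s.take k) ≠ y)
    (hrun : runA δ x s = y) :
    mealyMap δ (fun a => ⇑(rhoSwap y c₀ c₁ a)) x (s ++ [c]) = s ++ [rhoSwap y c₀ c₁ y c] := by
  rw [mealyMap_append, mealyMap_avoid δ y c₀ c₁ s x havoid, hrun]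
  congr 1

/-- The backwards path construction: a path hitting `y` for the first time at step `L`. -/
theorem path_lemma (hrev : ∀ i : S, Function.Bijective (δ i))
    (hne : δ c₀ y ≠ δ c₁ y) :
    ∀ L : ℕ, ∃ (x : A) (v : List Bool), v.length = L ∧
      runA δ x (encL c₀ c₁ v) = y ∧
      ∀ k < L, runA δ x ((encL c₀ c₁ v).take k) ≠ y := by
  intro L
  induction L with
  | zero => exact ⟨y, [], rfl, rfl, by omega⟩
  | succ L ih =>
    obtain ⟨x, v, hlen, hrun, havoid⟩ := ih
    have key : ∃ (bl : Bool) (x' : A), δ (encB c₀ c₁ bl) x' = x ∧ x' ≠ y := by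
      obtain ⟨x0, hx0⟩ := (hrev c₀).2 x
      obtain ⟨x1, hx1⟩ := (hrev c₁).2 x
      by_cases h0 : x0 = y
      · refine ⟨true, x1, hx1, fun h1 => hne ?_⟩
        rw [h0] at hx0
        rw [h1] at hx1
        rw [hx0, hx1]
      · exact ⟨false, x0, hx0, h0⟩
    obtain ⟨bl, x', hδ, hx'⟩ := key
    refine ⟨x', bl :: v, by simp [hlen], ?_, ?_⟩
    · rw [encL_cons, runA_cons, hδ, hrun]
    · intro k hk
      match k with
      | 0 => simpa [runA_nil] using hx'
      | k + 1 =>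
        rw [encL_cons]
        simp only [List.take_succ_cons, runA_cons, hδ]
        exact havoid k (by omega)

/-- Main transitivity: every binary word of length `L` is in the orbit of `c₀^L`. -/
theorem trans_main [Finite S] (hrev : ∀ i : S, Function.Bijective (δ i))
    (hne : δ c₀ y ≠ δ c₁ y) :
    ∀ (L : ℕ) (v : List Bool), v.length = L →
      ∃ f : Equiv.Perm (List S), f ∈ mealyGroup δ (fun a => ⇑(rhoSwap y c₀ c₁ a)) ∧
        ⇑f (List.replicate L c₀) = encL c₀ c₁ v := by
  have hGood : ∀ f ∈ mealyGroup δ (fun a => ⇑(rhoSwap y c₀ c₁ a)),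
      GoodFun c₀ c₁ ⇑f :=
    goodFun_group δ _ c₀ c₁ (rhoSwap_bin y c₀ c₁)
  intro L
  induction L with
  | zero =>
    intro v hv
    rw [List.length_eq_zero_iff] at hv
    subst hv
    exact ⟨1, one_mem _, by simp [encL_nil]⟩
  | succ L ih =>
    intro v hv
    rcases List.eq_nil_or_concat' v with rfl | ⟨v', bl, rfl⟩
    · simp at hv
    have hv' : v'.length = L := by simpa using hv
    obtain ⟨f₁, hf₁H, hf₁⟩ := ih v' hv'
    obtain ⟨x₀, vu, hvulen, hrunu, havoidu⟩ := path_lemma δ y c₀ c₁ hrev hne L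
    obtain ⟨f₂, hf₂H, hf₂⟩ := ih vu hvulen
    set u := encL c₀ c₁ vu with hu
    have hulen : u.length = L := (encL_length c₀ c₁ vu).trans hvulen
    set k := f₂ * f₁⁻¹ with hk
    have hkH : k ∈ mealyGroup δ (fun a => ⇑(rhoSwap y c₀ c₁ a)) :=
      mul_mem hf₂H (inv_mem hf₁H)
    have hkv' : ⇑k (encL c₀ c₁ v') = u := by
      rw [hk, Equiv.Perm.mul_apply, ← hf₁, (Equiv.Perm.inv_eq_iff_eq.mpr rfl : f₁⁻¹ (f₁ (List.replicate L c₀)) = _), hf₂]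
    have hrep : List.replicate (L+1) c₀ = List.replicate L c₀ ++ [c₀] :=
      List.replicate_succ'
    obtain ⟨cc, hcc⟩ := goodFun_extend (hGood f₁ hf₁H) (List.replicate L c₀) c₀
    have hf₁succ : ⇑f₁ (List.replicate (L+1) c₀) = encL c₀ c₁ v' ++ [cc] := by
      rw [hrep, hcc, hf₁]
    have hbinrep : Bin c₀ c₁ (List.replicate (L+1) c₀) := fun w hw =>
      Or.inl (List.eq_of_mem_replicate hw)
    have hbincc : cc = c₀ ∨ cc = c₁ := by
      have h1 := (hGood f₁ hf₁H).bin _ hbinrep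
      rw [hf₁succ] at h1
      exact h1 cc (by simp)
    have henc : encL c₀ c₁ (v' ++ [bl]) = encL c₀ c₁ v' ++ [encB c₀ c₁ bl] := by
      rw [encL_append]; rfl
    by_cases hcase : cc = encB c₀ c₁ bl
    · exact ⟨f₁, hf₁H, by rw [hf₁succ, hcase, henc]⟩
    · have hbintc : encB c₀ c₁ bl = c₀ ∨ encB c₀ c₁ bl = c₁ := encB_or c₀ c₁ bl
      have hg₀H : gPerm δ (rhoSwap y c₀ c₁) x₀ ∈
          mealyGroup δ (fun a => ⇑(rhoSwap y c₀ c₁ a)) :=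
        gPerm_mem δ (rhoSwap y c₀ c₁) x₀
      have havoidu' : ∀ j < u.length, runA δ x₀ (u.take j) ≠ y := by
        rw [hulen]; exact havoidu
      obtain ⟨d, hd⟩ := goodFun_extend (hGood k hkH) (encL c₀ c₁ v') cc
      rw [hkv'] at hd
      obtain ⟨d', hd'⟩ := goodFun_extend (hGood k hkH) (encL c₀ c₁ v') (encB c₀ c₁ bl)
      rw [hkv'] at hd'
      have hbinext : ∀ c : S, (c = c₀ ∨ c = c₁) → Bin c₀ c₁ (encL c₀ c₁ v' ++ [c]) := by
        intro c hcbin w hw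
        rcases List.mem_append.mp hw with h | h
        · exact encL_bin c₀ c₁ v' w h
        · rw [List.mem_singleton.mp h]; exact hcbin
      have hbind : d = c₀ ∨ d = c₁ := by
        have h1 := (hGood k hkH).bin _ (hbinext cc hbincc)
        rw [hd] at h1
        exact h1 d (by simp)
      have hbind' : d' = c₀ ∨ d' = c₁ := by
        have h1 := (hGood k hkH).bin _ (hbinext _ hbintc)
        rw [hd'] at h1
        exact h1 d' (by simp)
      have hdd' : d ≠ d' := by
        intro h
        apply hcase
        rw [← h] at hd'
        have h3 := k.injective (hd.trans hd'.symm)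
        have h4 := List.append_cancel_left h3
        simpa using h4
      have hswap : rhoSwap y c₀ c₁ y d = d' := by
        rcases hbind with rfl | rfl
        · rcases hbind' with rfl | rfl
          · exact absurd rfl hdd'
          · exact rhoSwap_left y d d'
        · rcases hbind' with rfl | rfl
          · exact rhoSwap_right y d' d
          · exact absurd rfl hdd'
      have hg₀app : ⇑(gPerm δ (rhoSwap y c₀ c₁) x₀) (u ++ [d]) = u ++ [d'] := by
        rw [gPerm_coe, mealyMap_last δ y c₀ c₁ x₀ u d havoidu' hrunu, hswap]
      refine ⟨(k⁻¹ * (gPerm δ (rhoSwap y c₀ c₁) x₀ * k)) * f₁,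
        mul_mem (mul_mem (inv_mem hkH) (mul_mem hg₀H hkH)) hf₁H, ?_⟩
      rw [Equiv.Perm.mul_apply, hf₁succ, Equiv.Perm.mul_apply, Equiv.Perm.mul_apply,
        hd, hg₀app, ← hd', (Equiv.Perm.inv_eq_iff_eq.mpr rfl : k⁻¹ (k (encL c₀ c₁ v' ++ [encB c₀ c₁ bl])) = _), henc]

end construction


end MealyAux

/-- Lemma 4: any reversible finite automaton over an alphabet with at
least two letters that has a cycle with exit can be enriched with invertible production
functions so that the generated group is infinite. -/
theorem reversible_cycle_with_exit_infinite_group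
    {A S : Type*} [Fintype A] [Fintype S] [Nonempty A]
    (hS : 1 < Fintype.card S) (δ : S → A → A)
    (hrev : ∀ i : S, Function.Bijective (δ i))
    (C : MealyCycle δ) (hC : HasExternalExit C ∨ HasInternalExit C) :
    ∃ ρ : A → Equiv.Perm S, Infinite ↥(mealyGroup δ (fun a => ⇑(ρ a))) := by
  classical
  -- extract a state with two letters acting differently on it
  obtain ⟨y, c₀, c₁, hne⟩ : ∃ (y : A) (c₀ c₁ : S), δ c₀ y ≠ δ c₁ y := by
    rcases hC with ⟨k, i, hi⟩ | ⟨k, i, _, hi⟩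
    · refine ⟨C.states k, C.labels k, i, fun h => hi ?_⟩
      rw [← h, C.step k]
      exact ⟨_, rfl⟩
    · exact ⟨C.states k, C.labels k, i, fun h => hi h.symm⟩
  have hc : c₀ ≠ c₁ := fun h => hne (by rw [h])
  refine ⟨MealyAux.rhoSwap y c₀ c₁, ?_⟩
  by_contra hinf
  rw [not_infinite_iff_finite] at hinf
  set N := Nat.card ↥(mealyGroup δ (fun a => ⇑(MealyAux.rhoSwap y c₀ c₁ a))) with hN
  have key := MealyAux.trans_main δ y c₀ c₁ hrev hne
  have hJex : ∀ w : Fin N → Bool,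
      ∃ f : Equiv.Perm (List S), f ∈ mealyGroup δ (fun a => ⇑(MealyAux.rhoSwap y c₀ c₁ a)) ∧
        ⇑f (List.replicate N c₀) = MealyAux.encL c₀ c₁ (List.ofFn w) :=
    fun w => key N (List.ofFn w) List.length_ofFn
  let J : (Fin N → Bool) → ↥(mealyGroup δ (fun a => ⇑(MealyAux.rhoSwap y c₀ c₁ a))) :=
    fun w => ⟨(hJex w).choose, (hJex w).choose_spec.1⟩
  have hJspec : ∀ w : Fin N → Bool,
      ⇑((J w : Equiv.Perm (List S))) (List.replicate N c₀) =
        MealyAux.encL c₀ c₁ (List.ofFn w) :=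
    fun w => (hJex w).choose_spec.2
  have hJinj : Function.Injective J := by
    intro w w' h
    have h1 : ((J w : Equiv.Perm (List S))) = ((J w' : Equiv.Perm (List S))) :=
      congrArg Subtype.val h
    have h2 := hJspec w
    rw [h1, hJspec w'] at h2
    exact List.ofFn_injective (MealyAux.encL_injective c₀ c₁ hc h2.symm)
  have hcard : Nat.card (Fin N → Bool) ≤ N := by
    rw [hN]
    exact Nat.card_le_card_of_injective J hJinj
  have h2N : (2 : ℕ) ^ N ≤ N := by
    rw [Nat.card_fun] at hcard
    simpa [Nat.card_eq_fintype_card] using hcard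
  exact absurd h2N (Nat.lt_two_pow_self (n := N)).not_ge
end

section
/- If a finite automaton (A, Σ, δ) contains a cycle with internal exit, then it also contains a (possibly shorter) cycle with external exit. -/
/-- an automaton with a cycle with internal exit also has a
(possibly shorter) cycle with external exit. -/
theorem internal_exit_implies_external_exit
    {A S : Type*} [Fintype A] [Fintype S]
    (δ : S → A → A) (C : MealyCycle δ) (hC : HasInternalExit C) :
    ∃ D : MealyCycle δ, HasExternalExit D := by
  obtain ⟨k, i, ⟨j, hj⟩, hne⟩ := hC
  have hnpos : 0 < C.n := C.npos
  have hjk1 : (j : ℕ) ≠ ((k : ℕ) + 1) % C.n := by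
    intro h
    exact hne (by rw [← hj, C.step k]; exact congrArg C.states (Fin.ext h))
  set m : ℕ := ((k : ℕ) + C.n - (j : ℕ)) % C.n + 1 with hm
  have hmpos : 0 < m := Nat.succ_pos _
  have key : ((j : ℕ) + (m - 1)) % C.n = (k : ℕ) := by
    have h2 : (j : ℕ) + ((k : ℕ) + C.n - (j : ℕ)) = (k : ℕ) + C.n := by
      have : (j : ℕ) < C.n := j.isLt
      omega
    calc ((j : ℕ) + (m - 1)) % C.n
        = ((j : ℕ) + ((k : ℕ) + C.n - (j : ℕ)) % C.n) % C.n := by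
          rw [hm, Nat.add_sub_cancel]
      _ = ((j : ℕ) + ((k : ℕ) + C.n - (j : ℕ))) % C.n := Nat.add_mod_mod _ _ _
      _ = ((k : ℕ) + C.n) % C.n := by rw [h2]
      _ = (k : ℕ) := by rw [Nat.add_mod_right]; exact Nat.mod_eq_of_lt k.isLt
  have hmlt : m < C.n := by
    have hlt : ((k : ℕ) + C.n - (j : ℕ)) % C.n < C.n := Nat.mod_lt _ hnpos
    rcases Nat.lt_or_ge (((k : ℕ) + C.n - (j : ℕ)) % C.n) (C.n - 1) with h | h
    · omega
    · exfalso
      have heq : m - 1 = C.n - 1 := by omega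
      apply hjk1
      have h5 : ((k : ℕ) + 1) % C.n = ((j : ℕ) + (m - 1) + 1) % C.n := by
        conv_lhs => rw [← key]
        rw [Nat.mod_add_mod]
      rw [h5, heq]
      have h3 : (j : ℕ) + (C.n - 1) + 1 = (j : ℕ) + C.n := by omega
      rw [h3, Nat.add_mod_right, Nat.mod_eq_of_lt j.isLt]
  have cancel : ∀ t₁ t₂ : ℕ, t₁ < C.n → t₂ < C.n →
      ((j : ℕ) + t₁) % C.n = ((j : ℕ) + t₂) % C.n → t₁ = t₂ := by
    intro t₁ t₂ h₁ h₂ h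
    have := Nat.ModEq.add_left_cancel' (j : ℕ) h
    rwa [Nat.ModEq, Nat.mod_eq_of_lt h₁, Nat.mod_eq_of_lt h₂] at this
  refine ⟨⟨m, hmpos,
    fun t => C.states ⟨((j : ℕ) + (t : ℕ)) % C.n, Nat.mod_lt _ hnpos⟩,
    fun t => if (t : ℕ) = m - 1 then i
      else C.labels ⟨((j : ℕ) + (t : ℕ)) % C.n, Nat.mod_lt _ hnpos⟩,
    ?_, ?_⟩, ?_⟩
  · -- injectivity
    intro t₁ t₂ h
    have h' := C.inj h
    have h'' : ((j : ℕ) + (t₁ : ℕ)) % C.n = ((j : ℕ) + (t₂ : ℕ)) % C.n :=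
      congrArg Fin.val h'
    exact Fin.ext (cancel _ _ (lt_trans t₁.isLt hmlt) (lt_trans t₂.isLt hmlt) h'')
  · -- step
    intro t
    by_cases ht : (t : ℕ) = m - 1
    · simp only [if_pos ht, ht, if_true]
      have hts : C.states ⟨((j : ℕ) + (m - 1)) % C.n, Nat.mod_lt _ hnpos⟩ = C.states k :=
        congrArg C.states (Fin.ext key)
      rw [hts, ← hj]
      refine congrArg C.states (Fin.ext ?_)
      show ((j : ℕ) : ℕ) = ((j : ℕ) + ((m - 1 + 1) % m)) % C.n
      have h0 : m - 1 + 1 = m := by omega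
      rw [h0, Nat.mod_self, Nat.add_zero, Nat.mod_eq_of_lt j.isLt]
    · simp only [if_neg ht]
      have htlt : (t : ℕ) + 1 < m := by have := t.isLt; omega
      rw [C.step]
      refine congrArg C.states (Fin.ext ?_)
      show (((j : ℕ) + (t : ℕ)) % C.n + 1) % C.n = ((j : ℕ) + (((t : ℕ) + 1) % m)) % C.n
      rw [Nat.mod_add_mod, Nat.mod_eq_of_lt htlt, ← Nat.add_assoc]
  · -- external exit
    refine ⟨⟨m - 1, by show m - 1 < m; omega⟩, C.labels k, ?_⟩
    rintro ⟨t, ht⟩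
    simp only at ht
    have hst : C.states ⟨((j : ℕ) + (m - 1)) % C.n, Nat.mod_lt _ hnpos⟩
        = C.states k := congrArg C.states (Fin.ext key)
    rw [hst, C.step k] at ht
    have h' := C.inj ht
    have h'' : ((j : ℕ) + (t : ℕ)) % C.n = ((k : ℕ) + 1) % C.n := congrArg Fin.val h'
    have hk1 : ((k : ℕ) + 1) % C.n = ((j : ℕ) + m) % C.n := by
      conv_lhs => rw [← key]
      rw [Nat.mod_add_mod]
      have h6 : (j : ℕ) + (m - 1) + 1 = (j : ℕ) + m := by omega
      rw [h6]
    rw [hk1] at h''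
    have := cancel _ _ (lt_trans t.isLt hmlt) hmlt h''
    exact absurd this (Nat.ne_of_lt t.isLt)
end

section
/- A Mealy automaton generates a finite semigroup if and only if its dual automaton generates a finite semigroup. -/
namespace MealyDual

variable {A S : Type*}

lemma dualAct_cons (δ : S → A → A) (ρ : A → S → S) (i : S) (s : List S) (u : List A) :
    dualAct δ ρ (i :: s) u = dualAct δ ρ s (mealyMap ρ δ i u) := rfl

lemma dualAct_append (δ : S → A → A) (ρ : A → S → S) (s t : List S) (u : List A) :
    dualAct δ ρ (s ++ t) u = dualAct δ ρ t (dualAct δ ρ s u) := List.foldl_append ..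

lemma dualAct_nil_right (δ : S → A → A) (ρ : A → S → S) (s : List S) :
    dualAct δ ρ s [] = [] := by
  induction s with
  | nil => rfl
  | cons i s ih => simpa [dualAct_cons, mealyMap] using ih

def tauF (δ : S → A → A) (s : List S) (x : A) : A := s.foldl (fun a i => δ i a) x

lemma L1 (δ : S → A → A) (ρ : A → S → S) (s : List S) (x : A) (u : List A) :
    dualAct δ ρ s (x :: u) = tauF δ s x :: dualAct δ ρ (mealyMap δ ρ x s) u := by
  induction s generalizing x u with
  | nil => rfl
  | cons i s ih =>
    simp only [dualAct_cons, mealyMap, tauF, List.foldl_cons]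
    exact ih (δ i x) (mealyMap ρ δ (ρ x i) u)

lemma key (δ : S → A → A) (ρ : A → S → S) :
    ∀ (w : List A) (s s' : List S),
      (∀ u : List A, tauF δ (dualAct ρ δ u s) = tauF δ (dualAct ρ δ u s')) →
      dualAct δ ρ s w = dualAct δ ρ s' w := by
  intro w
  induction w with
  | nil => intro s s' _; rw [dualAct_nil_right, dualAct_nil_right]
  | cons x w ih =>
    intro s s' h
    rw [L1, L1]
    have hx : tauF δ s = tauF δ s' := h []
    rw [hx]
    congr 1
    exact ih _ _ fun u => h (x :: u)

lemma aux [Fintype A] [Fintype S] (δ : S → A → A) (ρ : A → S → S)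
    (h : Finite ↥(mealySemigroup δ ρ)) : Finite ↥(mealySemigroup ρ δ) := by
  classical
  set P : List A → Function.End (List S) := fun u => dualAct ρ δ u with hP
  have hPmem : ∀ u : List A, u ≠ [] → P u ∈ mealySemigroup δ ρ := by
    intro u
    induction u with
    | nil => intro hne; exact absurd rfl hne
    | cons x v ih =>
      intro _
      rcases eq_or_ne v [] with rfl | hv
      · exact Subsemigroup.subset_closure ⟨x, rfl⟩
      · have hmul : P (x :: v) = P v * (show Function.End (List S) from mealyMap δ ρ x) := rfl
        rw [hmul]
        exact mul_mem (ih hv) (Subsemigroup.subset_closure ⟨x, rfl⟩)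
  have hcar : (↑(mealySemigroup δ ρ) : Set (Function.End (List S))).Finite :=
    Set.finite_coe_iff.mp h
  have hQfin : (Set.range P).Finite := by
    apply (hcar.union (Set.finite_singleton 1)).subset
    rintro _ ⟨u, rfl⟩
    rcases eq_or_ne u [] with rfl | hu
    · exact Or.inr rfl
    · exact Or.inl (hPmem u hu)
  haveI : Finite ↥(Set.range P) := hQfin.to_subtype
  set k : List S → (↥(Set.range P) → (A → A)) := fun s q => tauF δ (q.1 s) with hk
  have hkey : ∀ s s', k s = k s' → dualAct δ ρ s = dualAct δ ρ s' := by
    intro s s' hss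
    funext w
    apply key δ ρ w s s'
    intro u
    exact congrFun hss ⟨P u, ⟨u, rfl⟩⟩
  set D : List S → Function.End (List A) := fun s => dualAct δ ρ s with hD
  have hDfin : (Set.range D).Finite := by
    have hinj : Function.Injective (fun d : ↥(Set.range D) => k d.2.choose) := by
      intro d d' hdd
      have h1 : D d.2.choose = d.1 := d.2.choose_spec
      have h2 : D d'.2.choose = d'.1 := d'.2.choose_spec
      apply Subtype.ext
      rw [← h1, ← h2]
      exact hkey _ _ hdd
    exact Set.finite_coe_iff.mp (Finite.of_injective _ hinj)
  have hle : (↑(mealySemigroup ρ δ) : Set (Function.End (List A))) ⊆ Set.range D := by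
    have : mealySemigroup ρ δ ≤
        { carrier := Set.range D
          mul_mem' := by
            rintro _ _ ⟨s, rfl⟩ ⟨t, rfl⟩
            exact ⟨t ++ s, by funext u; exact (dualAct_append δ ρ t s u)⟩ } := by
      apply Subsemigroup.closure_le.mpr
      rintro _ ⟨i, rfl⟩
      exact ⟨[i], rfl⟩
    exact this
  exact Set.finite_coe_iff.mpr (hDfin.subset hle)

end MealyDual

/-- F3: a Mealy automaton generates a finite semigroup iff its dual
automaton (obtained by exchanging the stateset and the alphabet) does. -/
theorem finite_semigroup_iff_dual
    {A S : Type*} [Fintype A] [Fintype S] [Nonempty A] [Nonempty S]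
    (δ : S → A → A) (ρ : A → S → S) :
    Finite ↥(mealySemigroup δ ρ) ↔ Finite ↥(mealySemigroup ρ δ) :=
  ⟨MealyDual.aux δ ρ, MealyDual.aux ρ δ⟩
end

section
/- An invertible and reversible Mealy automaton that is not bireversible generates an infinite group. -/
section aux
variable {A S : Type*}

theorem mealyMap_nil (δ : S → A → A) (ρ : A → S → S) (x : A) : mealyMap δ ρ x [] = [] := rfl

theorem mealyMap_cons (δ : S → A → A) (ρ : A → S → S) (x : A) (i : S) (s : List S) :
    mealyMap δ ρ x (i :: s) = ρ x i :: mealyMap δ ρ (δ i x) s := rfl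

theorem mealyMap_length (δ : S → A → A) (ρ : A → S → S) (x : A) (l : List S) :
    (mealyMap δ ρ x l).length = l.length := by
  induction l generalizing x with
  | nil => rfl
  | cons i s ih => rw [mealyMap_cons]; simp [ih]

theorem mealyMap_bijective (δ : S → A → A) (ρ : A → S → S)
    (hρ : ∀ x, Function.Bijective (ρ x)) (x : A) : Function.Bijective (mealyMap δ ρ x) := by
  constructor
  · intro l₁
    induction l₁ generalizing x with
    | nil =>
      intro l₂ h
      cases l₂ with
      | nil => rfl
      | cons j t => simp [mealyMap_nil, mealyMap_cons] at h
    | cons i s ih =>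
      intro l₂ h
      cases l₂ with
      | nil => simp [mealyMap_nil, mealyMap_cons] at h
      | cons i₂ s₂ =>
        rw [mealyMap_cons, mealyMap_cons, List.cons.injEq] at h
        obtain ⟨h1, h2⟩ := h
        have hi : i = i₂ := (hρ x).1 h1
        subst hi
        rw [ih _ h2]
  · intro t
    induction t generalizing x with
    | nil => exact ⟨[], rfl⟩
    | cons j t ih =>
      obtain ⟨i, hi⟩ := (hρ x).2 j
      obtain ⟨s, hs⟩ := ih (δ i x)
      exact ⟨i :: s, by rw [mealyMap_cons, hi, hs]⟩

theorem dualAct_nil (δ : S → A → A) (ρ : A → S → S) (u : List A) : dualAct δ ρ [] u = u := rfl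

theorem dualAct_cons (δ : S → A → A) (ρ : A → S → S) (i : S) (s : List S) (u : List A) :
    dualAct δ ρ (i :: s) u = dualAct δ ρ s (mealyMap ρ δ i u) := rfl

theorem dualAct_append (δ : S → A → A) (ρ : A → S → S) (s t : List S) (u : List A) :
    dualAct δ ρ (s ++ t) u = dualAct δ ρ t (dualAct δ ρ s u) := by
  simp [dualAct, List.foldl_append]

theorem dualAct_nil_arg (δ : S → A → A) (ρ : A → S → S) (s : List S) :
    dualAct δ ρ s [] = [] := by
  induction s with
  | nil => rfl
  | cons i s ih => rw [dualAct_cons, mealyMap_nil]; exact ih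

theorem dualAct_length (δ : S → A → A) (ρ : A → S → S) (s : List S) (u : List A) :
    (dualAct δ ρ s u).length = u.length := by
  induction s generalizing u with
  | nil => rfl
  | cons i s ih => rw [dualAct_cons, ih, mealyMap_length]

theorem dualAct_injective (δ : S → A → A) (ρ : A → S → S)
    (hrev : ∀ i, Function.Bijective (δ i)) (s : List S) :
    Function.Injective (fun u => dualAct δ ρ s u) := by
  induction s with
  | nil => exact fun u v h => h
  | cons i s ih =>
    intro u v h
    exact (mealyMap_bijective ρ δ hrev i).1 (ih h)

/-- word transition function -/
def deltaWord (δ : S → A → A) (s : List S) (a : A) : A := s.foldl (fun a i => δ i a) a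

theorem deltaWord_nil (δ : S → A → A) (a : A) : deltaWord δ [] a = a := rfl

theorem deltaWord_cons (δ : S → A → A) (k : S) (s : List S) (a : A) :
    deltaWord δ (k :: s) a = deltaWord δ s (δ k a) := rfl

/-- Key cross identity. -/
theorem dualAct_cons_arg (δ : S → A → A) (ρ : A → S → S) (s : List S) (a : A) (u : List A) :
    dualAct δ ρ s (a :: u) = deltaWord δ s a :: dualAct δ ρ (mealyMap δ ρ a s) u := by
  induction s generalizing a u with
  | nil => rfl
  | cons k s ih =>
    rw [dualAct_cons, mealyMap_cons, ih, deltaWord_cons, mealyMap_cons, dualAct_cons]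

/-- action of a word of states -/
def piWord (δ : S → A → A) (ρ : A → S → S) (u : List A) (s : List S) : List S :=
  u.foldl (fun s a => mealyMap δ ρ a s) s

theorem piWord_nil (δ : S → A → A) (ρ : A → S → S) (s : List S) : piWord δ ρ [] s = s := rfl

theorem piWord_cons (δ : S → A → A) (ρ : A → S → S) (a : A) (u : List A) (s : List S) :
    piWord δ ρ (a :: u) s = piWord δ ρ u (mealyMap δ ρ a s) := rfl

/-- dual orbit -/
def dOrb (δ : S → A → A) (ρ : A → S → S) (u : List A) : Set (List A) :=
  Set.range fun s => dualAct δ ρ s u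

theorem mem_dOrb_self (δ : S → A → A) (ρ : A → S → S) (u : List A) : u ∈ dOrb δ ρ u :=
  ⟨[], rfl⟩

theorem dOrb_trans (δ : S → A → A) (ρ : A → S → S) {u v : List A}
    (h : v ∈ dOrb δ ρ u) : dOrb δ ρ v ⊆ dOrb δ ρ u := by
  obtain ⟨s, rfl⟩ := h
  rintro w ⟨t, rfl⟩
  exact ⟨s ++ t, (dualAct_append δ ρ s t u)⟩

theorem dOrb_finite [Finite A] (δ : S → A → A) (ρ : A → S → S) (u : List A) :
    (dOrb δ ρ u).Finite := by
  apply (List.finite_length_eq A u.length).subset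
  rintro v ⟨s, rfl⟩
  exact dualAct_length δ ρ s u

theorem dOrb_symm [Finite A] (δ : S → A → A) (ρ : A → S → S)
    (hrev : ∀ i, Function.Bijective (δ i)) {u v : List A}
    (h : v ∈ dOrb δ ρ u) : u ∈ dOrb δ ρ v := by
  obtain ⟨s, rfl⟩ := h
  set F : List A → List A := fun w => dualAct δ ρ s w with hF
  have hlen : ∀ k, (F^[k] u).length = u.length := by
    intro k
    induction k with
    | zero => rfl
    | succ k ih => rw [Function.iterate_succ_apply', hF, dualAct_length]; exact ih
  have hrep : ∀ (m : ℕ) (w : List A),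
      F^[m] w = dualAct δ ρ ((List.replicate m s).flatten) w := by
    intro m
    induction m with
    | zero => intro w; rfl
    | succ m ih =>
      intro w
      rw [Function.iterate_succ_apply, ih, List.replicate_succ, List.flatten_cons,
        dualAct_append]
  haveI := (List.finite_length_eq A u.length).to_subtype
  obtain ⟨k, l, hkl, he⟩ := Finite.exists_ne_map_eq_of_infinite
    (fun k : ℕ => (⟨F^[k] u, hlen k⟩ : {l : List A | l.length = u.length}))
  have he' : F^[k] u = F^[l] u := congrArg Subtype.val he
  have main : ∀ k l : ℕ, k < l → F^[k] u = F^[l] u → ∃ d, 1 ≤ d ∧ F^[d] u = u := by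
    intro k l hkl he
    have hinj : Function.Injective (F^[k]) :=
      Function.Injective.iterate (dualAct_injective δ ρ hrev s) k
    refine ⟨l - k, by omega, hinj ?_⟩
    rw [← Function.iterate_add_apply]
    have : k + (l - k) = l := by omega
    rw [this, ← he]
  have hd : ∃ d, 1 ≤ d ∧ F^[d] u = u := by
    rcases lt_or_gt_of_ne hkl with h | h
    · exact main k l h he'
    · exact main l k h he'.symm
  obtain ⟨d, hd1, hdu⟩ := hd
  have : F^[d] u = F^[d-1] (F u) := by
    conv_lhs => rw [show d = (d - 1) + 1 by omega]
    rw [Function.iterate_succ_apply]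
  rw [this, hrep] at hdu
  exact ⟨(List.replicate (d-1) s).flatten, hdu⟩

end aux

section aux2
variable {A S : Type*}

noncomputable def gprod (δ : S → A → A) (ρ : A → S → S)
    (hρ : ∀ a, Function.Bijective (ρ a)) : List A → Equiv.Perm (List S)
  | [] => 1
  | a :: u => gprod δ ρ hρ u * Equiv.ofBijective _ (mealyMap_bijective δ ρ hρ a)

theorem gprod_apply (δ : S → A → A) (ρ : A → S → S)
    (hρ : ∀ a, Function.Bijective (ρ a)) (u : List A) (s : List S) :
    gprod δ ρ hρ u s = piWord δ ρ u s := by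
  induction u generalizing s with
  | nil => rfl
  | cons a u ih =>
    rw [gprod, Equiv.Perm.mul_apply, piWord_cons, ← ih]
    rfl

theorem gprod_mem (δ : S → A → A) (ρ : A → S → S)
    (hρ : ∀ a, Function.Bijective (ρ a)) (u : List A) :
    gprod δ ρ hρ u ∈ mealyGroup δ ρ := by
  induction u with
  | nil => exact Subgroup.one_mem _
  | cons a u ih =>
    exact Subgroup.mul_mem _ ih (Subgroup.subset_closure ⟨a, rfl⟩)

theorem dOrb_step [Finite A] (δ : S → A → A) (ρ : A → S → S)
    (hrev : ∀ i, Function.Bijective (δ i)) (hρ : ∀ a, Function.Bijective (ρ a))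
    {x y : A} {i i' : S} (hne : x ≠ y) (hρxy : ρ x i = ρ y i') (hδ : δ i x = δ i' y)
    (w : List A) :
    (dOrb δ ρ w).ncard + 1 ≤ (dOrb δ ρ (x :: w)).ncard := by
  have h1 : dualAct δ ρ [i] (x :: w) = δ i x :: dualAct δ ρ [ρ x i] w := by
    rw [dualAct_cons_arg]; rfl
  have h2 : dualAct δ ρ [i'] (y :: w) = δ i' y :: dualAct δ ρ [ρ y i'] w := by
    rw [dualAct_cons_arg]; rfl
  have heq : dualAct δ ρ [i'] (y :: w) = dualAct δ ρ [i] (x :: w) := by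
    rw [h1, h2, hρxy, hδ]
  have hmemy : y :: w ∈ dOrb δ ρ (x :: w) := by
    have hc : dualAct δ ρ [i] (x :: w) ∈ dOrb δ ρ (x :: w) := ⟨[i], rfl⟩
    have hc' : dualAct δ ρ [i] (x :: w) ∈ dOrb δ ρ (y :: w) := ⟨[i'], heq⟩
    exact dOrb_trans δ ρ hc (dOrb_symm δ ρ hrev hc')
  have hmemX : x :: w ∈ dOrb δ ρ (x :: w) := mem_dOrb_self δ ρ _
  have hsurj : ∀ w' ∈ dOrb δ ρ w, ∃ v ∈ dOrb δ ρ (x :: w), v.tail = w' := by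
    rintro w' ⟨t, rfl⟩
    obtain ⟨s, hs⟩ := (mealyMap_bijective δ ρ hρ x).2 t
    refine ⟨dualAct δ ρ s (x :: w), ⟨s, rfl⟩, ?_⟩
    rw [dualAct_cons_arg, hs]
    rfl
  have hfinO : (dOrb δ ρ (x :: w)).Finite := dOrb_finite δ ρ _
  have hsub : dOrb δ ρ w ⊆ List.tail '' (dOrb δ ρ (x :: w) \ {x :: w}) := by
    intro w' hw'
    obtain ⟨v, hv, hvt⟩ := hsurj w' hw'
    by_cases hvx : v = x :: w
    · refine ⟨y :: w, ⟨hmemy, ?_⟩, ?_⟩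
      · simp only [Set.mem_singleton_iff, List.cons.injEq, not_and]
        exact fun h => absurd h.symm hne
      · subst hvx; exact hvt
    · exact ⟨v, ⟨hv, hvx⟩, hvt⟩
  have step1 : (dOrb δ ρ w).ncard ≤ (dOrb δ ρ (x :: w) \ {x :: w}).ncard :=
    le_trans (Set.ncard_le_ncard hsub (hfinO.diff.image _))
      (Set.ncard_image_le hfinO.diff)
  have step2 : (dOrb δ ρ (x :: w) \ {x :: w}).ncard + 1 = (dOrb δ ρ (x :: w)).ncard :=
    Set.ncard_diff_singleton_add_one hmemX hfinO
  omega

theorem dOrb_growth [Finite A] (δ : S → A → A) (ρ : A → S → S)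
    (hrev : ∀ i, Function.Bijective (δ i)) (hρ : ∀ a, Function.Bijective (ρ a))
    {x y : A} {i i' : S} (hne : x ≠ y) (hρxy : ρ x i = ρ y i') (hδ : δ i x = δ i' y)
    (m : ℕ) : m + 1 ≤ (dOrb δ ρ (List.replicate m x)).ncard := by
  induction m with
  | zero =>
    have : 0 < (dOrb δ ρ (List.replicate 0 x)).ncard := by
      rw [Set.ncard_pos (dOrb_finite δ ρ _)]
      exact ⟨_, mem_dOrb_self δ ρ _⟩
    omega
  | succ m ih =>
    rw [List.replicate_succ]
    have := dOrb_step δ ρ hrev hρ hne hρxy hδ (List.replicate m x)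
    omega

end aux2

section aux3
variable {A S : Type*}

theorem dualAct_range_finite [Finite A] [Finite S] (δ : S → A → A) (ρ : A → S → S)
    (hfin : (Set.range (piWord δ ρ)).Finite) :
    (Set.range fun s : List S => dualAct δ ρ s).Finite := by
  classical
  haveI := hfin.to_subtype
  set T := Set.range (piWord δ ρ) with hT
  set Ψ : List S → (↥T → (A → A)) := fun s p => deltaWord δ (p.1 s) with hΨ
  have key : ∀ (u : List A) (s t : List S), Ψ s = Ψ t →
      dualAct δ ρ s u = dualAct δ ρ t u := by
    intro u
    induction u with
    | nil => intro s t _; rw [dualAct_nil_arg, dualAct_nil_arg]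
    | cons a u ih =>
      intro s t h
      have h1 : deltaWord δ s a = deltaWord δ t a := by
        have h0 := congrFun h ⟨piWord δ ρ [], ⟨[], rfl⟩⟩
        exact congrFun h0 a
      have h2 : Ψ (mealyMap δ ρ a s) = Ψ (mealyMap δ ρ a t) := by
        funext p
        obtain ⟨f, hf⟩ := p
        obtain ⟨u', rfl⟩ := hf
        exact congrFun h ⟨piWord δ ρ (a :: u'), ⟨a :: u', rfl⟩⟩
      rw [dualAct_cons_arg, dualAct_cons_arg, h1, ih _ _ h2]
  set F : (↥T → (A → A)) → (List A → List A) := fun c =>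
    if h : ∃ s, Ψ s = c then dualAct δ ρ h.choose else fun u => u with hF
  have hfac : ∀ s : List S, dualAct δ ρ s = F (Ψ s) := by
    intro s
    have h : ∃ s', Ψ s' = Ψ s := ⟨s, rfl⟩
    rw [hF]
    simp only [dif_pos h]
    funext u
    exact (key u _ s h.choose_spec).symm
  have hsub : (Set.range fun s : List S => dualAct δ ρ s) ⊆ Set.range F := by
    rintro _ ⟨s, rfl⟩
    exact ⟨Ψ s, (hfac s).symm⟩
  exact (Set.finite_range F).subset hsub

end aux3


/-- F4: an invertible-reversible Mealy automaton which is not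
bireversible generates an infinite group.  Here the inverse automaton has transitions
`x⁻¹ —j|i→ y⁻¹` whenever `x —i|j→ y`, i.e. transition functions
`j ↦ (fun x => δ ((ρ x)⁻¹ j) x)` and production functions `x ↦ (ρ x)⁻¹`; since `M` is
invertible and reversible, `M` being bireversible amounts to the inverse automaton being
invertible and reversible. -/
theorem invertible_reversible_not_bireversible_infinite
    {A S : Type*} [Fintype A] [Fintype S] [Nonempty A] [Nonempty S]
    (δ : S → A → A) (ρ : A → Equiv.Perm S)
    (hrev : ∀ i : S, Function.Bijective (δ i))
    (hnotbi : ¬ ((∀ x : A, Function.Bijective fun j : S => (ρ x).symm j) ∧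
                 (∀ j : S, Function.Bijective fun x : A => δ ((ρ x).symm j) x))) :
    Infinite ↥(mealyGroup δ (fun a => ⇑(ρ a))) := by
  by_contra hInf
  rw [not_infinite_iff_finite] at hInf
  set ρ' : A → S → S := fun a => ⇑(ρ a) with hρ'
  have hρbij : ∀ a, Function.Bijective (ρ' a) := fun a => (ρ a).bijective
  -- extract the defect from non-bireversibility
  have hQ : ¬ ∀ j : S, Function.Bijective fun x : A => δ ((ρ x).symm j) x :=
    fun h => hnotbi ⟨fun x => (ρ x).symm.bijective, h⟩
  push_neg at hQ
  obtain ⟨j, hj⟩ := hQ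
  have hninj : ¬ Function.Injective fun x : A => δ ((ρ x).symm j) x := by
    intro h
    exact hj (Finite.injective_iff_bijective.mp h)
  rw [Function.not_injective_iff] at hninj
  obtain ⟨x, y, hxy, hne⟩ := hninj
  have hδxy : δ ((ρ x).symm j) x = δ ((ρ y).symm j) y := hxy
  have hρxy : ρ' x ((ρ x).symm j) = ρ' y ((ρ y).symm j) := by
    simp [hρ']
  -- the range of piWord is finite since the group is finite
  have hTfin : (Set.range (piWord δ ρ')).Finite := by
    haveI : Finite ↥(mealyGroup δ ρ') := hInf
    have hGfin : ((mealyGroup δ ρ' : Set (Equiv.Perm (List S)))).Finite := Set.toFinite _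
    have himg : Set.range (piWord δ ρ') ⊆
        (fun g : Equiv.Perm (List S) => ⇑g) '' (mealyGroup δ ρ' : Set (Equiv.Perm (List S))) := by
      rintro _ ⟨u, rfl⟩
      exact ⟨gprod δ ρ' hρbij u, gprod_mem δ ρ' hρbij u,
        funext fun s => gprod_apply δ ρ' hρbij u s⟩
    exact (hGfin.image _).subset himg
  have hD : (Set.range fun s : List S => dualAct δ ρ' s).Finite :=
    dualAct_range_finite δ ρ' hTfin
  -- dual orbits are uniformly bounded ...
  have horb : ∀ u : List A,
      (dOrb δ ρ' u).ncard ≤ (Set.range fun s : List S => dualAct δ ρ' s).ncard := by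
    intro u
    have hor : dOrb δ ρ' u =
        (fun f : List A → List A => f u) '' (Set.range fun s : List S => dualAct δ ρ' s) := by
      ext v
      constructor
      · rintro ⟨s, rfl⟩
        exact ⟨dualAct δ ρ' s, ⟨s, rfl⟩, rfl⟩
      · rintro ⟨f, ⟨s, rfl⟩, rfl⟩
        exact ⟨s, rfl⟩
    rw [hor]
    exact Set.ncard_image_le hD
  -- ... but grow unboundedly: contradiction
  set N := (Set.range fun s : List S => dualAct δ ρ' s).ncard
  have hgrow := dOrb_growth δ ρ' hrev hρbij hne hρxy hδxy N
  have hbound := horb (List.replicate N x)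
  omega
end

section
/- Let M = (A, Σ, δ, ρ) be a Mealy automaton, let x be a state, let i, j ∈ Σ with i ≠ j, and suppose there is a cycle through x whose label from x is the word s = j t (with t ∈ Σ*), that δ_i(x) = y is not on this cycle, and that x is not reachable from y. If ρ_x is the transposition of i and j and ρ_z is the identity on Σ for every state z ≠ x, then for every n ≥ 1 the orbit of the word (j t)^n under the extended map ρ_x : Σ^* → Σ^* has size 2^n; consequently ρ_x is an element of infinite order in the group generated by M. -/
/-- Auxiliary encoding: list of bits to word, block `(if b then i else j) :: t`. -/
def mealyEncode {S : Type*} (i j : S) (t : List S) : List Bool → List S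
  | [] => []
  | b :: bs => ((if b then i else j) :: t) ++ mealyEncode i j t bs

/-- Auxiliary odometer step on bit lists. -/
def mealyNext : List Bool → List Bool
  | [] => []
  | true :: bs => false :: bs
  | false :: bs => true :: mealyNext bs

/-- Binary value (little-endian, `true ↦ 0`, `false ↦ 1`). -/
def mealyVal : List Bool → ℕ
  | [] => 0
  | b :: bs => (if b then 0 else 1) + 2 * mealyVal bs

theorem mealyNext_length (w : List Bool) : (mealyNext w).length = w.length := by
  induction w with
  | nil => rfl
  | cons b bs ih => cases b <;> simp [mealyNext, ih]

theorem mealyVal_lt (w : List Bool) : mealyVal w < 2 ^ w.length := by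
  induction w with
  | nil => simp [mealyVal]
  | cons b bs ih => cases b <;> simp [mealyVal, pow_succ] <;> omega

theorem mealyVal_next (w : List Bool) :
    mealyVal (mealyNext w) = (mealyVal w + 1) % 2 ^ w.length := by
  induction w with
  | nil => rfl
  | cons b bs ih =>
    cases b with
    | true =>
      have h := mealyVal_lt bs
      rw [show mealyNext (true :: bs) = false :: bs from rfl,
          show (2:ℕ) ^ (true :: bs).length = 2 ^ bs.length * 2 by simp [pow_succ],
          show mealyVal (false :: bs) = 1 + 2 * mealyVal bs by simp [mealyVal],
          show mealyVal (true :: bs) = 2 * mealyVal bs by simp [mealyVal],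
          Nat.mod_eq_of_lt (by omega)]
      omega
    | false =>
      rw [show mealyNext (false :: bs) = true :: mealyNext bs from rfl,
          show mealyVal (true :: mealyNext bs) = 2 * mealyVal (mealyNext bs) by simp [mealyVal],
          show mealyVal (false :: bs) = 1 + 2 * mealyVal bs by simp [mealyVal], ih,
          show (2:ℕ) ^ (false :: bs).length = 2 * 2 ^ bs.length by rw [List.length_cons, pow_succ]; ring,
          show (1 + 2 * mealyVal bs + 1) = 2 * (mealyVal bs + 1) by ring,
          Nat.mul_mod_mul_left]

theorem mealyVal_inj (w1 w2 : List Bool) (hl : w1.length = w2.length)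
    (hv : mealyVal w1 = mealyVal w2) : w1 = w2 := by
  induction w1 generalizing w2 with
  | nil => cases w2 with
    | nil => rfl
    | cons b bs => simp at hl
  | cons b bs ih =>
    cases w2 with
    | nil => simp at hl
    | cons c cs =>
      simp only [List.length_cons, Nat.add_right_cancel_iff] at hl
      have hbc : b = c := by cases b <;> cases c <;> simp [mealyVal] at hv ⊢ <;> omega
      subst hbc
      have : mealyVal bs = mealyVal cs := by cases b <;> simp [mealyVal] at hv <;> omega
      rw [ih cs hl this]

theorem mealyEncode_inj {S : Type*} {i j : S} (hij : i ≠ j) (t : List S)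
    (w1 w2 : List Bool) (h : mealyEncode i j t w1 = mealyEncode i j t w2) : w1 = w2 := by
  induction w1 generalizing w2 with
  | nil => cases w2 with
    | nil => rfl
    | cons c cs => simp [mealyEncode] at h
  | cons b bs ih =>
    cases w2 with
    | nil => simp [mealyEncode] at h
    | cons c cs =>
      simp only [mealyEncode, List.cons_append, List.cons.injEq, List.append_cancel_left_eq] at h
      obtain ⟨h1, h2⟩ := h
      have hbc : b = c := by
        cases b <;> cases c <;> simp at h1 <;> first | rfl | exact absurd h1 hij | exact absurd h1.symm hij
      rw [hbc, ih cs h2]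

theorem mealyEncode_replicate {S : Type*} (i j : S) (t : List S) (n : ℕ) :
    mealyEncode i j t (List.replicate n false) = (List.replicate n (j :: t)).flatten := by
  induction n with
  | zero => rfl
  | succ n ih => simp [List.replicate_succ, mealyEncode, ih]

theorem mealyVal_replicate (n : ℕ) : mealyVal (List.replicate n false) = 2 ^ n - 1 := by
  induction n with
  | zero => rfl
  | succ n ih =>
    have : (1:ℕ) ≤ 2 ^ n := Nat.one_le_two_pow
    simp [List.replicate_succ, mealyVal, ih, pow_succ]; omega

section MealyAux

variable {A S : Type*} [DecidableEq S]
    (δ : S → A → A) (ρ : A → S → S) (x : A)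
    (C : MealyCycle δ) (hx : C.states ⟨0, C.npos⟩ = x)
    (hρz : ∀ z : A, z ≠ x → ρ z = id)

set_option linter.unusedSectionVars false

include hρz in
theorem mealy_id :
    ∀ (u : List S) (z : A), ¬ Reachable δ z x → mealyMap δ ρ z u = u := by
  intro u
  induction u with
  | nil => intro z _; rfl
  | cons a u ih =>
    intro z hz
    have hzx : z ≠ x := by rintro rfl; exact hz ⟨[], rfl⟩
    have hs : ¬ Reachable δ (δ a z) x := by
      intro ⟨s, hs⟩
      exact hz ⟨a :: s, hs⟩
    rw [mealyMap, hρz z hzx, ih _ hs]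
    rfl

include hx hρz in
theorem mealy_cyc :
    ∀ d k, k + d = C.n → 1 ≤ k → ∀ w : List S,
      mealyMap δ ρ (C.states ⟨k % C.n, Nat.mod_lt _ C.npos⟩)
          ((List.ofFn C.labels).drop k ++ w)
        = (List.ofFn C.labels).drop k ++ mealyMap δ ρ x w := by
  intro d
  induction d with
  | zero =>
    intro k hk _ w
    have hkN : k = C.n := by omega
    have h1 : (List.ofFn C.labels).drop k = [] := by
      rw [hkN]; exact List.drop_eq_nil_of_le (by simp)
    have h2 : (⟨k % C.n, Nat.mod_lt _ C.npos⟩ : Fin C.n) = ⟨0, C.npos⟩ := by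
      ext; simp [hkN, Nat.mod_self]
    rw [h1, h2, hx]
    simp
  | succ d ih =>
    intro k hk hk1 w
    have hkn : k < C.n := by omega
    have hmod : (⟨k % C.n, Nat.mod_lt _ C.npos⟩ : Fin C.n) = ⟨k, hkn⟩ := by
      ext; simp [Nat.mod_eq_of_lt hkn]
    have hdrop : (List.ofFn C.labels).drop k
        = C.labels ⟨k, hkn⟩ :: (List.ofFn C.labels).drop (k + 1) := by
      rw [List.drop_eq_getElem_cons (by simpa using hkn)]
      congr 1
      simp
    have hne : C.states ⟨k, hkn⟩ ≠ x := by
      rw [← hx]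
      intro h
      have := C.inj h
      simp only [Fin.mk.injEq] at this
      omega
    rw [hmod, hdrop, List.cons_append, mealyMap, hρz _ hne, C.step ⟨k, hkn⟩]
    have hco : ((⟨k, hkn⟩ : Fin C.n) : ℕ) + 1 = k + 1 := rfl
    have := ih (k + 1) (by omega) (by omega) w
    simp only [hco]
    rw [this]
    rfl

end MealyAux

/-- proof of the River of no return Lemma: suppose a cycle through `x`
has label `j t` from `x`, the exit `δ_i(x) = y` (`i ≠ j`) leaves the cycle, and `x` is not
reachable from `y`.  If `ρ_x` is the transposition of `i` and `j` and every other `ρ_z` is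
the identity, then the orbit of `(j t)^n` under `ρ_x` has size `2^n` for every `n ≥ 1`;
consequently `ρ_x` has infinite order in the generated group. -/
theorem adding_machine_mimic
    {A S : Type*} [Fintype A] [Fintype S] [DecidableEq S]
    (δ : S → A → A) (ρ : A → S → S)
    (x : A) (i j : S) (hij : i ≠ j)
    (C : MealyCycle δ) (hx : C.states ⟨0, C.npos⟩ = x)
    (t : List S) (hlabel : List.ofFn C.labels = j :: t)
    (y : A) (hy : δ i x = y) (hyC : y ∉ Set.range C.states)
    (hnr : ¬ Reachable δ y x)
    (hρx : ρ x = ⇑(Equiv.swap i j)) (hρz : ∀ z : A, z ≠ x → ρ z = id) :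
    (∀ n : ℕ, 1 ≤ n → Set.ncard
        (Set.range fun m : ℕ =>
          (mealyMap δ ρ x)^[m] ((List.replicate n (j :: t)).flatten)) = 2 ^ n)
    ∧ orderOf (G := Function.End (List S)) (mealyMap δ ρ x) = 0 := by
  subst hy
  have hlab0 : C.labels ⟨0, C.npos⟩ = j := by
    have h0 : (List.ofFn C.labels)[0]'(by simp [C.npos]) = j := by
      simp [hlabel]
    simpa using h0
  have ht : (List.ofFn C.labels).drop 1 = t := by rw [hlabel]; rfl
  -- Lemma 1: behaviour on a block starting with j
  have lem1 : ∀ w : List S,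
      mealyMap δ ρ x (j :: (t ++ w)) = i :: (t ++ mealyMap δ ρ x w) := by
    intro w
    rw [mealyMap, hρx, Equiv.swap_apply_right]
    congr 1
    have hstep0 := C.step ⟨0, C.npos⟩
    rw [hlab0, hx] at hstep0
    have hco : ((⟨0, C.npos⟩ : Fin C.n) : ℕ) + 1 = 1 := rfl
    rw [hco] at hstep0
    rw [hstep0, ← ht]
    exact mealy_cyc δ ρ x C hx hρz (C.n - 1) 1 (by omega) le_rfl w
  -- Lemma 2: behaviour on a block starting with i
  have lem2 : ∀ w : List S,
      mealyMap δ ρ x (i :: (t ++ w)) = j :: (t ++ w) := by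
    intro w
    rw [mealyMap, hρx, Equiv.swap_apply_left]
    congr 1
    exact mealy_id δ ρ x hρz (t ++ w) _ hnr
  -- single application on encoded words
  have hstep : ∀ w : List Bool,
      mealyMap δ ρ x (mealyEncode i j t w) = mealyEncode i j t (mealyNext w) := by
    intro w
    induction w with
    | nil => rfl
    | cons b bs ih =>
      cases b with
      | false =>
        show mealyMap δ ρ x (j :: (t ++ mealyEncode i j t bs)) = _
        rw [lem1, ih]
        rfl
      | true =>
        show mealyMap δ ρ x (i :: (t ++ mealyEncode i j t bs)) = _
        rw [lem2]
        rfl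
  have iter : ∀ (m : ℕ) (w : List Bool),
      (mealyMap δ ρ x)^[m] (mealyEncode i j t w) = mealyEncode i j t (mealyNext^[m] w) := by
    intro m
    induction m with
    | zero => intro w; rfl
    | succ m ih =>
      intro w
      rw [Function.iterate_succ_apply, hstep, ih, ← Function.iterate_succ_apply]
  have lenIter : ∀ (m : ℕ) (w : List Bool), (mealyNext^[m] w).length = w.length := by
    intro m
    induction m with
    | zero => intro w; rfl
    | succ m ih =>
      intro w
      rw [Function.iterate_succ_apply', mealyNext_length, ih]
  have valIter : ∀ (m : ℕ) (w : List Bool),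
      mealyVal (mealyNext^[m] w) = (mealyVal w + m) % 2 ^ w.length := by
    intro m
    induction m with
    | zero => intro w; simp [Nat.mod_eq_of_lt (mealyVal_lt w)]
    | succ m ih =>
      intro w
      rw [Function.iterate_succ_apply', mealyVal_next, lenIter, ih, Nat.mod_add_mod,
        ← add_assoc]
  -- the main orbit computation
  have main : ∀ n : ℕ, 1 ≤ n → Set.ncard
      (Set.range fun m : ℕ =>
        (mealyMap δ ρ x)^[m] ((List.replicate n (j :: t)).flatten)) = 2 ^ n := by
    intro n hn
    have h2 : 0 < 2 ^ n := Nat.pow_pos (by norm_num)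
    have hW : (List.replicate n (j :: t)).flatten
        = mealyEncode i j t (List.replicate n false) :=
      (mealyEncode_replicate i j t n).symm
    have hw0len : (List.replicate n false).length = n := List.length_replicate
    have hc : mealyVal (List.replicate n false) = 2 ^ n - 1 := mealyVal_replicate n
    have hvalm : ∀ m : ℕ, mealyVal (mealyNext^[m] (List.replicate n false))
        = (2 ^ n - 1 + m) % 2 ^ n := by
      intro m; rw [valIter, hw0len, hc]
    have hfix : (mealyMap δ ρ x)^[2 ^ n] ((List.replicate n (j :: t)).flatten)
        = (List.replicate n (j :: t)).flatten := by
      rw [hW, iter]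
      congr 1
      apply mealyVal_inj _ _ (by rw [lenIter])
      rw [hvalm, Nat.add_mod_right, Nat.mod_eq_of_lt (by omega), hc]
    have hper : ∀ m : ℕ, (mealyMap δ ρ x)^[m] ((List.replicate n (j :: t)).flatten)
        = (mealyMap δ ρ x)^[m % 2 ^ n] ((List.replicate n (j :: t)).flatten) := by
      intro m
      conv_lhs => rw [← Nat.div_add_mod m (2 ^ n)]
      rw [add_comm, Function.iterate_add_apply, Function.iterate_mul,
        Function.iterate_fixed hfix]
    have hinj : Set.InjOn (fun m : ℕ =>
        (mealyMap δ ρ x)^[m] ((List.replicate n (j :: t)).flatten))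
        ↑(Finset.range (2 ^ n)) := by
      intro m1 hm1 m2 hm2 h
      simp only [Finset.coe_range, Set.mem_Iio] at hm1 hm2
      simp only [hW, iter] at h
      have hv := congrArg mealyVal (mealyEncode_inj hij t _ _ h)
      rw [hvalm, hvalm] at hv
      have hmod : m1 % 2 ^ n = m2 % 2 ^ n :=
        Nat.ModEq.add_left_cancel' (2 ^ n - 1) hv
      rwa [Nat.mod_eq_of_lt hm1, Nat.mod_eq_of_lt hm2] at hmod
    have hrange : (Set.range fun m : ℕ =>
        (mealyMap δ ρ x)^[m] ((List.replicate n (j :: t)).flatten))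
        = ↑((Finset.range (2 ^ n)).image fun m : ℕ =>
          (mealyMap δ ρ x)^[m] ((List.replicate n (j :: t)).flatten)) := by
      ext v
      simp only [Set.mem_range, Finset.coe_image, Set.mem_image, Finset.mem_coe,
        Finset.mem_range]
      constructor
      · rintro ⟨m, rfl⟩
        exact ⟨m % 2 ^ n, Nat.mod_lt _ h2, (hper m).symm⟩
      · rintro ⟨m, _, h⟩
        exact ⟨m, h⟩
    rw [hrange, Set.ncard_coe_finset, Finset.card_image_of_injOn hinj, Finset.card_range]
  refine ⟨main, ?_⟩
  refine orderOf_eq_zero_iff.mpr ?_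
  intro hfin
  obtain ⟨d, hd, hpow⟩ := isOfFinOrder_iff_pow_eq_one.mp hfin
  have hid2 : ∀ u : List S, (mealyMap δ ρ x)^[d] u = u := by
    have hpowfun : ∀ (m : ℕ) (g : Function.End (List S)) (u : List S),
        (g ^ m) u = g^[m] u := by
      intro m
      induction m with
      | zero => intro g u; rfl
      | succ m ih =>
        intro g u
        rw [pow_succ]
        exact ih g (g u)
    intro u
    rw [← hpowfun d (mealyMap δ ρ x) u, hpow]
    rfl
  have h1 := main d hd
  have hsub : (Set.range fun m : ℕ =>
      (mealyMap δ ρ x)^[m] ((List.replicate d (j :: t)).flatten))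
      ⊆ ↑((Finset.range d).image fun m : ℕ =>
        (mealyMap δ ρ x)^[m] ((List.replicate d (j :: t)).flatten)) := by
    rintro v ⟨m, rfl⟩
    simp only [Finset.coe_image, Set.mem_image, Finset.mem_coe, Finset.mem_range]
    refine ⟨m % d, Nat.mod_lt _ hd, ?_⟩
    conv_rhs => rw [← Nat.div_add_mod m d]
    rw [add_comm, Function.iterate_add_apply, Function.iterate_mul,
      Function.iterate_fixed (hid2 _)]
  have hle := Set.ncard_le_ncard hsub (Finset.finite_toSet _)
  rw [h1, Set.ncard_coe_finset] at hle
  have hle2 := hle.trans (Finset.card_image_le.trans_eq (Finset.card_range d))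
  have := @Nat.lt_two_pow_self d
  omega
end
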